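/- arXiv:2207.11758 — 4 statements merged into one kernel-verified Lean document; each statement's English description precedes it below -/
import Mathlib

section
/- There exist absolute constants C > 0 and y₀ such that for all integers y ≥ y₀, H ≥ 1, and k with 1 ≤ k ≤ log log y, the number N_k(H; y) of integer tuples (h₁, h₂, …, h_k) ∈ ([−H, H] ∩ ℤ)^k with y | h₁h₂⋯h_k and h₁h₂⋯h_k ≠ 0 satisfies N_k(H; y) ≤ C · (2H)^k · H^{C·k·log k / log log y} / y, where log denotes the natural logarithm. -/
open Finset


lemma NkHy_eq' (k H y : ℕ) :
    Nat.card {h : Fin k → ℤ //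
      (∀ i, h i ∈ Finset.Icc (-(H : ℤ)) (H : ℤ)) ∧ (y : ℤ) ∣ ∏ i, h i ∧ (∏ i, h i) ≠ 0}
    = ((Fintype.piFinset fun _ : Fin k => Finset.Icc (-(H:ℤ)) (H:ℤ)).filter
        (fun h => (y : ℤ) ∣ ∏ i, h i ∧ (∏ i, h i) ≠ 0)).card := by
  rw [← Nat.card_eq_finsetCard]
  apply Nat.card_congr
  apply Equiv.subtypeEquivRight
  intro h
  simp [Fintype.mem_piFinset]

-- factorization lemma
lemma exists_fac : ∀ {k : ℕ} (y : ℕ) (h : Fin k → ℤ), y ≠ 0 → (y:ℤ) ∣ ∏ i, h i →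
    ∃ d : Fin k → ℕ, ∏ i, d i = y ∧ ∀ i, (d i : ℤ) ∣ h i := by
  intro k
  induction k with
  | zero =>
    intro y h hy hdvd
    simp only [Finset.univ_eq_empty, Finset.prod_empty] at hdvd
    have : y ∣ 1 := by exact_mod_cast hdvd
    refine ⟨fun i => i.elim0, by simpa using (Nat.dvd_one.mp this).symm, fun i => i.elim0⟩
  | succ k ih =>
    intro y h hy hdvd
    rw [Fin.prod_univ_succ] at hdvd
    set g : ℕ := Int.gcd (y:ℤ) (h 0) with hg
    have hgy : (g:ℤ) ∣ (y:ℤ) := Int.gcd_dvd_left _ _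
    have hgh : (g:ℤ) ∣ h 0 := Int.gcd_dvd_right _ _
    have hgy' : g ∣ y := by exact_mod_cast hgy
    have hgpos : 0 < g := by
      rcases Nat.eq_zero_or_pos g with h0 | h0
      · exfalso; rw [hg] at h0
        have := Int.gcd_eq_zero_iff.mp h0
        exact hy (by exact_mod_cast this.1)
      · exact h0
    set y' : ℕ := y / g with hy'
    have hy'0 : y' ≠ 0 := by
      have := Nat.div_pos (Nat.le_of_dvd (Nat.pos_of_ne_zero hy) hgy') hgpos
      omega
    have hyy' : g * y' = y := Nat.mul_div_cancel' hgy'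
    obtain ⟨m, hm⟩ := id hgh
    have hcop : IsCoprime ((y':ℤ)) m := by
      rw [Int.isCoprime_iff_gcd_eq_one]
      have h1 : (y' : ℤ) = (y:ℤ) / (g:ℤ) := by
        have hyg : (y:ℤ) = (g:ℤ) * (y':ℤ) := by exact_mod_cast hyy'.symm
        rw [hyg, Int.mul_ediv_cancel_left _ (by exact_mod_cast hgpos.ne')]
      have h2 : m = (h 0) / (g:ℤ) := by
        rw [hm]; rw [Int.mul_ediv_cancel_left _ (by exact_mod_cast hgpos.ne')]
      rw [h1, h2, hg]
      exact Int.gcd_div_gcd_div_gcd (by exact_mod_cast hgpos)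
    have hdvd' : (y' : ℤ) ∣ ∏ i : Fin k, h i.succ := by
      apply hcop.dvd_of_dvd_mul_left
      have : (g:ℤ) * (y':ℤ) ∣ (g:ℤ) * (m * ∏ i : Fin k, h i.succ) := by
        rw [show  (g:ℤ) * (m * ∏ i : Fin k, h i.succ) = (g * m) * ∏ i : Fin k, h i.succ by ring,
          ← hm]
        exact_mod_cast (by exact_mod_cast hyy' ▸ hdvd : ((g * y' : ℕ) :ℤ) ∣ _)
      exact (mul_dvd_mul_iff_left (by exact_mod_cast hgpos.ne' : (g:ℤ) ≠ 0)).mp this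
    obtain ⟨d', hd'1, hd'2⟩ := ih y' (fun i => h i.succ) hy'0 hdvd'
    refine ⟨Fin.cons g d', ?_, ?_⟩
    · rw [Fin.prod_univ_succ]
      simpa [hd'1] using hyy'
    · intro i
      refine Fin.cases ?_ ?_ i
      · simpa using hgh
      · intro j; simpa using hd'2 j


-- one-dimensional count
lemma cnt_le (H m : ℕ) (hm : m ≠ 0) :
    (((Finset.Icc (-(H:ℤ)) (H:ℤ))).filter fun x => (m:ℤ) ∣ x ∧ x ≠ 0).card ≤ 2 * (H / m) := by
  set n : ℕ := H / m with hn
  have hsub : (((Finset.Icc (-(H:ℤ)) (H:ℤ))).filter fun x => (m:ℤ) ∣ x ∧ x ≠ 0)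
      ⊆ ((Finset.Icc (-(n:ℤ)) (n:ℤ)).erase 0).image (fun j => (m:ℤ) * j) := by
    intro x hx
    simp only [mem_filter, Finset.mem_Icc] at hx
    obtain ⟨⟨hx1, hx2⟩, ⟨j, hj⟩, hx0⟩ := hx
    have hmpos : (0:ℤ) < m := by exact_mod_cast Nat.pos_of_ne_zero hm
    refine Finset.mem_image.mpr ⟨j, ?_, hj.symm⟩
    have hj0 : j ≠ 0 := by rintro rfl; simp at hj; exact hx0 hj
    have hjn : j ≤ (n:ℤ) := by
      have : j * m ≤ H := by rw [mul_comm]; rw [hj] at hx2; exact hx2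
      have := (Int.le_ediv_iff_mul_le hmpos).mpr this
      calc j ≤ (H:ℤ) / (m:ℤ) := this
        _ = (n:ℤ) := by rw [hn]; exact_mod_cast (Int.natCast_div H m).symm
    have hjn' : -(n:ℤ) ≤ j := by
      have h2 : -j * m ≤ H := by
        have := neg_le_neg hx1
        rw [hj] at this; simp at this; linarith [this]
      have := (Int.le_ediv_iff_mul_le hmpos).mpr h2
      have h3 : (H:ℤ)/(m:ℤ) = (n:ℤ) := by rw [hn]; exact_mod_cast (Int.natCast_div H m).symm
      rw [h3] at this; linarith
    simp [hj0, hjn, hjn']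
  calc _ ≤ (((Finset.Icc (-(n:ℤ)) (n:ℤ)).erase 0).image (fun j => (m:ℤ) * j)).card :=
        Finset.card_le_card hsub
    _ ≤ ((Finset.Icc (-(n:ℤ)) (n:ℤ)).erase 0).card := Finset.card_image_le
    _ ≤ 2 * n := by
        rw [Finset.card_erase_of_mem (by simp), Int.card_Icc]
        have : ((n:ℤ) - -(n:ℤ) + 1).toNat = 2*n+1 := by omega
        omega




lemma S_le_D (k H y : ℕ) (hy : y ≠ 0) :
    (((Fintype.piFinset fun _ : Fin k => Finset.Icc (-(H:ℤ)) (H:ℤ)).filter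
        (fun h => (y : ℤ) ∣ ∏ i, h i ∧ (∏ i, h i) ≠ 0)).card : ℝ)
    ≤ (((Fintype.piFinset fun _ : Fin k => y.divisors).filter
        (fun d => ∏ i, d i = y)).card : ℝ) * (2*(H:ℝ))^k / y := by
  classical
  set D := ((Fintype.piFinset fun _ : Fin k => y.divisors).filter (fun d => ∏ i, d i = y))
    with hD
  set T : (Fin k → ℕ) → Finset (Fin k → ℤ) := fun d =>
    Fintype.piFinset fun i => (Finset.Icc (-(H:ℤ)) (H:ℤ)).filter
      fun x => (d i : ℤ) ∣ x ∧ x ≠ 0 with hT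
  have hsub : ((Fintype.piFinset fun _ : Fin k => Finset.Icc (-(H:ℤ)) (H:ℤ)).filter
        (fun h => (y : ℤ) ∣ ∏ i, h i ∧ (∏ i, h i) ≠ 0)) ⊆ D.biUnion T := by
    intro h hh
    simp only [mem_filter, Fintype.mem_piFinset] at hh
    obtain ⟨hbox, hdvd, hne⟩ := hh
    obtain ⟨d, hd1, hd2⟩ := exists_fac y h hy hdvd
    have hne' : ∀ i, h i ≠ 0 := by
      intro i hi
      exact hne (Finset.prod_eq_zero (Finset.mem_univ i) hi)
    refine Finset.mem_biUnion.mpr ⟨d, ?_, ?_⟩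
    · simp only [hD, mem_filter, Fintype.mem_piFinset]
      exact ⟨fun i => Nat.mem_divisors.mpr ⟨hd1 ▸ Finset.dvd_prod_of_mem d (mem_univ i), hy⟩, hd1⟩
    · simp only [hT, Fintype.mem_piFinset, mem_filter]
      exact fun i => ⟨hbox i, hd2 i, hne' i⟩
  have hdpos : ∀ d ∈ D, ∀ i, d i ≠ 0 := by
    intro d hd i
    simp only [hD, mem_filter, Fintype.mem_piFinset] at hd
    exact Nat.pos_of_mem_divisors (hd.1 i) |>.ne'
  calc (_ : ℝ) ≤ ((D.biUnion T).card : ℝ) := by exact_mod_cast Finset.card_le_card hsub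
    _ ≤ ∑ d ∈ D, ((T d).card : ℝ) := by exact_mod_cast Finset.card_biUnion_le
    _ ≤ ∑ d ∈ D, (2*(H:ℝ))^k / y := by
        apply Finset.sum_le_sum
        intro d hd
        have hc : (T d).card ≤ ∏ i, 2 * (H / d i) := by
          rw [hT, Fintype.card_piFinset]
          exact Finset.prod_le_prod' fun i _ => cnt_le H (d i) (hdpos d hd i)
        calc ((T d).card : ℝ) ≤ ∏ i : Fin k, (2 * (H / d i) : ℕ) := by exact_mod_cast hc
          _ ≤ ∏ i : Fin k, 2 * (H:ℝ) / (d i) := by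
              rw [Nat.cast_prod]
              apply Finset.prod_le_prod
              · intro i _; positivity
              · intro i _
                push_cast
                calc ((2:ℝ) * ((H / d i : ℕ):ℝ)) ≤ 2 * ((H:ℝ)/(d i)) := by
                      have := Nat.cast_div_le (α := ℝ) (m := H) (n := d i)
                      linarith
                  _ = 2 * (H:ℝ) / (d i) := by ring
          _ = (2*(H:ℝ))^k / y := by
              rw [Finset.prod_div_distrib]
              simp only [Finset.prod_const, Finset.card_univ, Fintype.card_fin]
              congr 1
              rw [← Nat.cast_prod]
              exact_mod_cast congrArg (Nat.cast (R := ℝ)) (Finset.mem_filter.mp hd).2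
    _ = _ := by rw [Finset.sum_const, nsmul_eq_mul, mul_div_assoc]


lemma adt_le_pow1 (k a : ℕ) : (Nat.antidiagonalTuple k a).card ≤ (a+1)^k := by
  have hsub : Nat.antidiagonalTuple k a ⊆ Fintype.piFinset fun _ : Fin k => Finset.range (a+1) := by
    intro c hc
    rw [Nat.mem_antidiagonalTuple] at hc
    rw [Fintype.mem_piFinset]
    intro i
    rw [Finset.mem_range]
    have : c i ≤ a := hc ▸ Finset.single_le_sum (f := c) (fun _ _ => Nat.zero_le _) (mem_univ i)
    omega
  calc _ ≤ _ := Finset.card_le_card hsub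
    _ = (a+1)^k := by rw [Fintype.card_piFinset]; simp

lemma adt_le_pow2 (k : ℕ) (hk : k ≠ 0) : ∀ a : ℕ, (Nat.antidiagonalTuple k a).card ≤ k^a := by
  intro a
  induction a with
  | zero => simp [Nat.antidiagonalTuple_zero_right]
  | succ a ih =>
    classical
    have key : (Nat.antidiagonalTuple k (a+1)).card ≤
        ((Finset.univ : Finset (Fin k)) ×ˢ Nat.antidiagonalTuple k a).card := by
      have hex : ∀ c ∈ Nat.antidiagonalTuple k (a+1), ∃ i, c i ≠ 0 := by
        intro c hc
        rw [Nat.mem_antidiagonalTuple] at hc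
        by_contra hall
        push_neg at hall
        simp only [Finset.sum_congr rfl fun i _ => hall i, Finset.sum_const_zero] at hc
        omega
      set F : (Fin k → ℕ) → Fin k × (Fin k → ℕ) := fun c =>
        if h : ∃ i, c i ≠ 0 then (h.choose, Function.update c h.choose (c h.choose - 1))
        else (⟨0, Nat.pos_of_ne_zero hk⟩, c) with hF
      apply Finset.card_le_card_of_injOn F
      · intro c hc
        have h := hex c hc
        rw [Finset.mem_coe, Nat.mem_antidiagonalTuple] at hc
        simp only [hF, dif_pos h]
        rw [Finset.mem_coe, Finset.mem_product]
        refine ⟨Finset.mem_univ _, ?_⟩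
        rw [Nat.mem_antidiagonalTuple]
        rw [Finset.sum_update_of_mem (Finset.mem_univ _)]
        have h1 : c h.choose ≠ 0 := h.choose_spec
        have h2 : ∑ i ∈ univ \ {h.choose}, c i + c h.choose = a + 1 := by
          rw [Finset.sdiff_singleton_eq_erase, Finset.sum_erase_add _ _ (Finset.mem_univ _)]
          exact hc
        omega
      · intro c hc c' hc' heq
        have h := hex c hc
        have h' := hex c' hc'
        simp only [hF, dif_pos h, dif_pos h', Prod.mk.injEq] at heq
        obtain ⟨hi, hu⟩ := heq
        funext j
        by_cases hj : j = h.choose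
        · subst hj
          have := congrFun hu h.choose
          rw [Function.update_self] at this
          rw [← hi, Function.update_self] at this
          have h1 : c h.choose ≠ 0 := h.choose_spec
          have h2 : c' h.choose ≠ 0 := hi ▸ h'.choose_spec
          omega
        · have := congrFun hu j
          rwa [Function.update_of_ne hj, ← hi, Function.update_of_ne hj] at this
    calc _ ≤ _ := key
      _ = k * (Nat.antidiagonalTuple k a).card := by
          rw [Finset.card_product]; simp
      _ ≤ k * k^a := Nat.mul_le_mul_left k ih
      _ = k^(a+1) := by ring


lemma D_le_prod (k y : ℕ) (hy : y ≠ 0) :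
    ((Fintype.piFinset fun _ : Fin k => y.divisors).filter (fun d => ∏ i, d i = y)).card
    ≤ ∏ p ∈ y.primeFactors, (Nat.antidiagonalTuple k (y.factorization p)).card := by
  classical
  set A := y.primeFactors with hA
  set target : Finset ((p : A) → Fin k → ℕ) :=
    Fintype.piFinset fun p : A => Nat.antidiagonalTuple k (y.factorization p) with htarget
  have hcard : target.card = ∏ p ∈ A, (Nat.antidiagonalTuple k (y.factorization p)).card := by
    rw [htarget, Fintype.card_piFinset]
    exact Finset.prod_coe_sort A (fun p => (Nat.antidiagonalTuple k (y.factorization p)).card)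
  rw [← hcard]
  apply Finset.card_le_card_of_injOn (fun d => fun p : A => fun i => (d i).factorization p)
  · intro d hd
    simp only [mem_coe, mem_filter, Fintype.mem_piFinset] at hd
    obtain ⟨hdvd, hprod⟩ := hd
    have hne : ∀ i : Fin k, d i ≠ 0 := fun i => (Nat.pos_of_mem_divisors (hdvd i)).ne'
    rw [htarget, Finset.mem_coe, Fintype.mem_piFinset]
    intro p
    rw [Nat.mem_antidiagonalTuple]
    have := Nat.factorization_prod (S := (univ : Finset (Fin k))) (g := d) (fun i _ => hne i)
    rw [hprod] at this
    rw [← Finsupp.finset_sum_apply, ← this]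
  · intro d hd d' hd' heq
    simp only [coe_filter, Set.mem_setOf_eq, Fintype.mem_piFinset] at hd hd'
    have hne : ∀ i : Fin k, d i ≠ 0 := fun i => (Nat.pos_of_mem_divisors (hd.1 i)).ne'
    have hne' : ∀ i : Fin k, d' i ≠ 0 := fun i => (Nat.pos_of_mem_divisors (hd'.1 i)).ne'
    funext i
    apply Nat.factorization_inj (by simp [hne i]) (by simp [hne' i])
    ext p
    by_cases hp : p ∈ A
    · exact congrFun (congrFun heq ⟨p, hp⟩) i
    · have h1 : (d i).factorization p = 0 := by
        by_contra h
        have : p ∈ (d i).primeFactors := by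
          rw [← Nat.support_factorization]; exact Finsupp.mem_support_iff.mpr h
        exact hp (Nat.primeFactors_mono (Nat.dvd_of_mem_divisors (hd.1 i)) hy this)
      have h2 : (d' i).factorization p = 0 := by
        by_contra h
        have : p ∈ (d' i).primeFactors := by
          rw [← Nat.support_factorization]; exact Finsupp.mem_support_iff.mpr h
        exact hp (Nat.primeFactors_mono (Nat.dvd_of_mem_divisors (hd'.1 i)) hy this)
      rw [h1, h2]



lemma prod_adt_le (k y T : ℕ) (hy : y ≠ 0) (hk : k ≠ 0) (hT : 2 ≤ T) :
    ∏ p ∈ y.primeFactors, (Nat.antidiagonalTuple k (y.factorization p)).card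
    ≤ (Nat.log 2 y + 1)^(k*T) * k^(Nat.log T y) := by
  classical
  set A := y.primeFactors with hA
  set M := Nat.log 2 y with hM
  have hax : ∀ p ∈ A, y.factorization p ≤ M := by
    intro p hp
    have hpp : p.Prime := Nat.prime_of_mem_primeFactors hp
    have h1 : p ^ y.factorization p ∣ y := Nat.ordProj_dvd y p
    have h2 : 2 ^ y.factorization p ≤ p ^ y.factorization p :=
      Nat.pow_le_pow_left hpp.two_le _
    exact (Nat.le_log_iff_pow_le one_lt_two hy).mpr
      (h2.trans (Nat.le_of_dvd (Nat.pos_of_ne_zero hy) h1))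
  have hyprod : ∏ p ∈ A, p ^ y.factorization p = y := by
    rw [hA, ← Nat.support_factorization]
    exact Nat.factorization_prod_pow_eq_self hy
  rw [← Finset.prod_filter_mul_prod_filter_not A (fun p => p < T)]
  apply Nat.mul_le_mul
  · -- small primes
    calc ∏ p ∈ A.filter (fun p => p < T), (Nat.antidiagonalTuple k (y.factorization p)).card
        ≤ ∏ p ∈ A.filter (fun p => p < T), (M+1)^k := by
          apply Finset.prod_le_prod' 
          intro p hp
          calc (Nat.antidiagonalTuple k (y.factorization p)).card
              ≤ (y.factorization p + 1)^k := adt_le_pow1 k _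
            _ ≤ (M+1)^k := Nat.pow_le_pow_left (by
                have := hax p (Finset.mem_filter.mp hp).1; omega) k
      _ = ((M+1)^k)^(A.filter (fun p => p < T)).card := by rw [Finset.prod_const]
      _ ≤ ((M+1)^k)^T := by
          apply Nat.pow_le_pow_right (Nat.one_le_iff_ne_zero.mpr (by positivity))
          calc (A.filter (fun p => p < T)).card ≤ (Finset.range T).card := by
                apply Finset.card_le_card
                intro p hp
                exact Finset.mem_range.mpr (Finset.mem_filter.mp hp).2
            _ = T := Finset.card_range T
      _ = (M+1)^(k*T) := by rw [← pow_mul]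
  · -- large primes
    set Af := A.filter (fun p => ¬ p < T) with hAf
    set s := ∑ p ∈ Af, y.factorization p with hs
    have hsy : T ^ s ≤ y := by
      calc T ^ s = ∏ p ∈ Af, T ^ y.factorization p := by
            rw [hs, ← Finset.prod_pow_eq_pow_sum]
        _ ≤ ∏ p ∈ Af, p ^ y.factorization p := by
            apply Finset.prod_le_prod'
            intro p hp
            exact Nat.pow_le_pow_left (by
              have := (Finset.mem_filter.mp hp).2; omega) _
        _ ≤ ∏ p ∈ A, p ^ y.factorization p := by
            apply Nat.le_of_dvd
            · rw [hyprod]; exact Nat.pos_of_ne_zero hy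
            · exact Finset.prod_dvd_prod_of_subset _ _ _ (Finset.filter_subset _ _)
        _ = y := hyprod
    have hsle : s ≤ Nat.log T y := (Nat.le_log_iff_pow_le (by omega) hy).mpr hsy
    calc ∏ p ∈ Af, (Nat.antidiagonalTuple k (y.factorization p)).card
        ≤ ∏ p ∈ Af, k ^ y.factorization p :=
          Finset.prod_le_prod' fun p _ => adt_le_pow2 k hk _
      _ = k ^ s := by rw [hs, ← Finset.prod_pow_eq_pow_sum]
      _ ≤ k ^ Nat.log T y := Nat.pow_le_pow_right (Nat.pos_of_ne_zero hk) hsle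


lemma log_le_div8 {z : ℝ} (hz : 256 ≤ z) : Real.log z ≤ z / 8 := by
  have h0 : (0:ℝ) < z := by linarith
  have hs : (16:ℝ) ≤ Real.sqrt z := by
    rw [show (16:ℝ) = Real.sqrt 256 by
      rw [show (256:ℝ) = 16^2 by norm_num, Real.sqrt_sq (by norm_num)]]
    exact Real.sqrt_le_sqrt hz
  have hsq : Real.sqrt z * Real.sqrt z = z := Real.mul_self_sqrt h0.le
  have h1 : Real.log z = 2 * Real.log (Real.sqrt z) := by
    rw [Real.log_sqrt h0.le]; ring
  have h2 : Real.log (Real.sqrt z) ≤ Real.sqrt z - 1 :=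
    Real.log_le_sub_one_of_pos (by positivity)
  nlinarith [hs, hsq]

set_option maxHeartbeats 1600000 in
lemma analytic_bound (y H k : ℕ) (hy2 : 2 ≤ y) (hH : 1 ≤ H) (hk2 : 2 ≤ k)
    (hLL : 256 ≤ Real.log (Real.log y)) (hL : 2 * (Real.log (Real.log y))^4 ≤ Real.log y)
    (hkLL : (k:ℝ) ≤ Real.log (Real.log y)) (hyH : y ≤ H^k) :
    (((Nat.log 2 y + 1)^(k * (max 2 ⌈Real.log y / (Real.log (Real.log y))^4⌉₊))
      * k^(Nat.log (max 2 ⌈Real.log y / (Real.log (Real.log y))^4⌉₊) y) : ℕ) : ℝ)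
    ≤ (H:ℝ) ^ ((100:ℝ) * k * Real.log k / Real.log (Real.log y)) := by
  set L := Real.log y with hLdef
  set LL := Real.log L with hLLdef
  set T : ℕ := max 2 ⌈L / LL^4⌉₊ with hTdef
  set M := Nat.log 2 y with hMdef
  set NT := Nat.log T y with hNTdef
  clear_value L LL T M NT
  have hy0 : y ≠ 0 := by omega
  have hLLpos : (0:ℝ) < LL := by linarith
  have hLL4pos : (0:ℝ) < LL^4 := by positivity
  have hLL4one : (1:ℝ) ≤ LL^4 := one_le_pow₀ (by linarith)
  have hLpos : (0:ℝ) < L := by linarith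
  have hx2 : (2:ℝ) ≤ L / LL^4 := by
    rw [le_div_iff₀ (by positivity)]; linarith
  have hxpos : (0:ℝ) < L / LL^4 := by linarith
  -- T bounds
  have hT_ge : L / LL^4 ≤ (T:ℝ) := by
    calc L / LL^4 ≤ (⌈L / LL^4⌉₊ : ℝ) := Nat.le_ceil _
      _ ≤ (T:ℝ) := by rw [hTdef]; exact_mod_cast Nat.cast_le.mpr (le_max_right _ _)
  have hT_le : (T:ℝ) ≤ 2 * (L / LL^4) := by
    rw [hTdef]
    push_cast [Nat.cast_max]
    apply max_le
    · linarith
    · have := Nat.ceil_lt_add_one hxpos.le (R := ℝ)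
      linarith
  have hT2 : 2 ≤ T := by rw [hTdef]; exact le_max_left _ _
  -- M bounds
  have hlog2 : (1:ℝ)/2 ≤ Real.log 2 := by
    have := Real.log_two_gt_d9; linarith
  have hM2L : (M:ℝ) ≤ 2 * L := by
    have h1 : (2:ℕ)^M ≤ y := by rw [hMdef]; exact Nat.pow_log_le_self 2 hy0
    have h2 : (M:ℝ) * Real.log 2 ≤ L := by
      rw [hLdef, ← Real.log_pow]
      apply Real.log_le_log (by positivity)
      exact_mod_cast h1
    nlinarith
  have hL1 : (1:ℝ) ≤ L := by linarith
  have hlogM1 : Real.log (M+1) ≤ 2 * LL := by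
    have h1 : ((M:ℝ)+1) ≤ 3 * L := by linarith
    have h2 : Real.log ((M:ℝ)+1) ≤ Real.log (3*L) := Real.log_le_log (by positivity) h1
    rw [Real.log_mul (by norm_num) hLpos.ne'] at h2
    have h3 : Real.log 3 ≤ 2 := by
      have := Real.log_le_sub_one_of_pos (show (0:ℝ) < 3 by norm_num); linarith
    rw [← hLLdef] at h2
    linarith
  -- log T lower bound
  have hlogLL : Real.log LL ≤ LL / 8 := log_le_div8 hLL
  have hlogT : LL / 2 ≤ Real.log T := by
    have h1 : Real.log (L / LL^4) ≤ Real.log T := Real.log_le_log hxpos hT_ge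
    rw [Real.log_div hLpos.ne' (by positivity), Real.log_pow] at h1
    push_cast at h1
    rw [← hLLdef] at h1
    linarith
  -- NT bound
  have hNT : (NT:ℝ) ≤ 2 * L / LL := by
    have h1 : (T:ℕ)^NT ≤ y := by rw [hNTdef]; exact Nat.pow_log_le_self T hy0
    have h2 : (NT:ℝ) * Real.log T ≤ L := by
      rw [hLdef, ← Real.log_pow]
      apply Real.log_le_log (by positivity)
      exact_mod_cast h1
    have h3 : (NT:ℝ) * (LL/2) ≤ L := by
      calc (NT:ℝ) * (LL/2) ≤ (NT:ℝ) * Real.log T := by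
            apply mul_le_mul_of_nonneg_left hlogT (by positivity)
        _ ≤ L := h2
    rw [le_div_iff₀ hLLpos]
    linarith
  -- log k bounds
  have hlogk : Real.log 2 ≤ Real.log k :=
    Real.log_le_log (by norm_num) (by exact_mod_cast hk2)
  have hlogk0 : (0:ℝ) < Real.log k := by linarith
  -- L ≤ k log H
  have hlogH : L ≤ (k:ℝ) * Real.log H := by
    rw [hLdef, ← Real.log_pow]
    apply Real.log_le_log (by positivity)
    exact_mod_cast hyH
  have hlogH0 : (0:ℝ) ≤ Real.log H := Real.log_natCast_nonneg H
  -- main exponent inequality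
  have hterm1 : ((k:ℝ) * T) * Real.log (M+1) ≤ Real.log k * L / LL := by
    have e1 : ((k:ℝ) * T) * Real.log (M+1) ≤ (k:ℝ) * (2 * (L/LL^4)) * (2*LL) := by
      apply mul_le_mul
      · apply mul_le_mul_of_nonneg_left hT_le (by positivity)
      · exact hlogM1
      · apply Real.log_nonneg; push_cast; linarith [Nat.zero_le M]
      · positivity
    have e2 : (k:ℝ) * (2 * (L/LL^4)) * (2*LL) = 4 * (k:ℝ) * L / LL^3 := by
      field_simp; ring
    have e3 : 4 * (k:ℝ) * L / LL^3 ≤ 4 * L / LL^2 := by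
      rw [div_le_div_iff₀ (by positivity) (by positivity)]
      calc 4 * (k:ℝ) * L * LL^2 ≤ 4 * LL * L * LL^2 := by gcongr
        _ = 4 * L * LL^3 := by ring
    have e4 : 4 * L / LL^2 ≤ Real.log k * L / LL := by
      have hq : (0:ℝ) ≤ L/LL := by positivity
      have h45 : 4/LL ≤ Real.log k := by
        rw [div_le_iff₀ hLLpos]
        calc (4:ℝ) ≤ (1/2)*256 := by norm_num
          _ ≤ Real.log k * LL := mul_le_mul (by linarith) hLL (by norm_num) (by linarith)
      calc 4*L/LL^2 = (4/LL)*(L/LL) := by ring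
        _ ≤ Real.log k * (L/LL) := mul_le_mul_of_nonneg_right h45 hq
        _ = Real.log k * L/LL := by ring
    linarith
  have hterm2 : (NT:ℝ) * Real.log k ≤ 2 * Real.log k * L / LL := by
    calc (NT:ℝ) * Real.log k ≤ (2 * L / LL) * Real.log k := by
          apply mul_le_mul_of_nonneg_right hNT hlogk0.le
      _ = 2 * Real.log k * L / LL := by ring
  have hmain : ((k:ℝ) * T) * Real.log (M+1) + (NT:ℝ) * Real.log k
      ≤ (100 * (k:ℝ) * Real.log k / LL) * Real.log H := by
    have h1 : Real.log k * L / LL + 2 * Real.log k * L / LL = 3 * Real.log k * L / LL := by ring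
    have hnum : 3 * Real.log k * L ≤ 100 * (k:ℝ) * Real.log k * Real.log H := by
      calc 3 * Real.log k * L ≤ 3 * Real.log k * ((k:ℝ) * Real.log H) := by
            apply mul_le_mul_of_nonneg_left hlogH (by positivity)
        _ ≤ 100 * (k:ℝ) * Real.log k * Real.log H := by nlinarith
    have h2 : 3 * Real.log k * L / LL ≤ (100 * (k:ℝ) * Real.log k / LL) * Real.log H := by
      rw [div_mul_eq_mul_div, div_le_div_iff₀ hLLpos hLLpos]
      nlinarith [mul_le_mul_of_nonneg_right hnum hLLpos.le]
    linarith
  -- convert to exp form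
  have hlhs : (((M + 1)^(k * T) * k^NT : ℕ) : ℝ)
      = Real.exp ((((k * T : ℕ)):ℝ) * Real.log ((M:ℝ)+1) + ((NT:ℕ):ℝ) * Real.log k) := by
    rw [Real.exp_add, ← Real.log_pow, ← Real.log_pow,
      Real.exp_log (by positivity), Real.exp_log (by positivity)]
    push_cast
    ring
  rw [hlhs]
  have hHpos : (0:ℝ) < H := by exact_mod_cast hH
  rw [Real.rpow_def_of_pos hHpos]
  apply Real.exp_le_exp.mpr
  rw [mul_comm (Real.log H)]
  have : (((k * T : ℕ)):ℝ) = (k:ℝ) * T := by push_cast; ring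
  rw [this]
  exact hmain


/-- `N_k(H; y)`: the number of integer tuples `(h₁,…,h_k) ∈ ([−H,H] ∩ ℤ)^k`
with `y ∣ h₁⋯h_k` and `h₁⋯h_k ≠ 0`. -/
noncomputable def NkHy (k H y : ℕ) : ℕ :=
  Nat.card {h : Fin k → ℤ //
    (∀ i, h i ∈ Finset.Icc (-(H : ℤ)) (H : ℤ)) ∧ (y : ℤ) ∣ ∏ i, h i ∧ (∏ i, h i) ≠ 0}



lemma NkHy_zero (k H y : ℕ) (h : H^k < y) : NkHy k H y = 0 := by
  rw [NkHy, Nat.card_eq_zero]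
  left
  rw [isEmpty_subtype]
  rintro x ⟨hbox, hdvd, hne⟩
  have h1 : (y:ℤ) ≤ |∏ i, x i| := Int.le_of_dvd (abs_pos.mpr hne) (dvd_abs (y:ℤ) _ |>.mpr hdvd)
  have h2 : |∏ i, x i| ≤ (H:ℤ)^k := by
    rw [abs_prod]
    calc ∏ i, |x i| ≤ ∏ _i : Fin k, (H:ℤ) := by
          apply Finset.prod_le_prod (fun i _ => abs_nonneg _)
          intro i _
          have := Finset.mem_Icc.mp (hbox i)
          rw [abs_le]; exact this
      _ = (H:ℤ)^k := by simp
  have : (y:ℤ) ≤ (H:ℤ)^k := h1.trans h2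
  have : y ≤ H^k := by exact_mod_cast this
  omega

lemma D_card_one (y : ℕ) :
    ((Fintype.piFinset fun _ : Fin 1 => y.divisors).filter (fun d => ∏ i, d i = y)).card ≤ 1 := by
  apply Finset.card_le_one.mpr
  intro a ha b hb
  rw [Finset.mem_filter] at ha hb
  funext i
  have hi : i = 0 := Subsingleton.elim _ _
  rw [hi]
  have h1 : a 0 = y := by rw [← Fin.prod_univ_one a]; exact ha.2
  have h2 : b 0 = y := by rw [← Fin.prod_univ_one b]; exact hb.2
  rw [h1, h2]

lemma exists_y0 : ∃ y₀ : ℕ, ∀ y : ℕ, y₀ ≤ y → 2 ≤ y ∧ 256 ≤ Real.log (Real.log y)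
    ∧ 2*(Real.log (Real.log y))^4 ≤ Real.log y := by
  have tLL : Filter.Tendsto (fun y:ℕ => Real.log (Real.log y)) Filter.atTop Filter.atTop :=
    Real.tendsto_log_atTop.comp (Real.tendsto_log_atTop.comp tendsto_natCast_atTop_atTop)
  have h1 : ∀ᶠ y : ℕ in Filter.atTop, 256 ≤ Real.log (Real.log y) :=
    tLL.eventually_ge_atTop 256
  have texp : Filter.Tendsto
      (fun y:ℕ => Real.exp (Real.log (Real.log y)) / (Real.log (Real.log y))^4)
      Filter.atTop Filter.atTop := (Real.tendsto_exp_div_pow_atTop 4).comp tLL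
  have heq : ∀ᶠ y : ℕ in Filter.atTop,
      Real.exp (Real.log (Real.log y)) / (Real.log (Real.log y))^4
      = Real.log y / (Real.log (Real.log y))^4 := by
    filter_upwards [Filter.eventually_ge_atTop 3] with y hy
    congr 1
    apply Real.exp_log
    have : (1:ℝ) < (y:ℝ) := by exact_mod_cast (by omega : 1 < y)
    exact Real.log_pos this
  have h2 : ∀ᶠ y : ℕ in Filter.atTop, 2 ≤ Real.log y / (Real.log (Real.log y))^4 := by
    filter_upwards [texp.eventually_ge_atTop 2, heq] with y hy hyeq
    rwa [hyeq] at hy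
  have h3 : ∀ᶠ y : ℕ in Filter.atTop,
      (2 ≤ y ∧ 256 ≤ Real.log (Real.log y) ∧ 2*(Real.log (Real.log y))^4 ≤ Real.log y) := by
    filter_upwards [h1, h2, Filter.eventually_ge_atTop 2] with y hy1 hy2 hy3
    refine ⟨hy3, hy1, ?_⟩
    have hp : (0:ℝ) < (Real.log (Real.log y))^4 := by positivity
    rw [le_div_iff₀ hp] at hy2
    linarith
  obtain ⟨y₀, hy₀⟩ := h3.exists_forall_of_atTop
  exact ⟨y₀, fun y hy => hy₀ y hy⟩

/-- there are absolute constants `C > 0` and `y₀` such that for all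
integers `y ≥ y₀`, `H ≥ 1` and `1 ≤ k ≤ log log y`, one has
`N_k(H; y) ≤ C · (2H)^k · H^{C·k·log k / log log y} / y`. -/
theorem stmt4 :
    ∃ C : ℝ, 0 < C ∧ ∃ y₀ : ℕ, ∀ y H k : ℕ, y₀ ≤ y → 1 ≤ H → 1 ≤ k →
      (k : ℝ) ≤ Real.log (Real.log y) →
      (NkHy k H y : ℝ) ≤
        C * (2 * (H : ℝ)) ^ k *
          (H : ℝ) ^ (C * (k : ℝ) * Real.log k / Real.log (Real.log y)) / (y : ℝ) := by
  obtain ⟨y₀, hy₀⟩ := exists_y0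
  refine ⟨100, by norm_num, y₀, ?_⟩
  intro y H k hy hH hk1 hkLL
  obtain ⟨hy2, hLL, hL⟩ := hy₀ y hy
  have hy0 : y ≠ 0 := by omega
  have hHpos : (0:ℝ) < H := by exact_mod_cast hH
  have hypos : (0:ℝ) < y := by exact_mod_cast (by omega : 0 < y)
  by_cases hcase : y ≤ H^k
  · -- main case
    have hNk : (NkHy k H y : ℝ)
        ≤ (((Fintype.piFinset fun _ : Fin k => y.divisors).filter
            (fun d => ∏ i, d i = y)).card : ℝ) * (2*(H:ℝ))^k / y := by
      rw [NkHy, NkHy_eq']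
      exact S_le_D k H y hy0
    have hD : (((Fintype.piFinset fun _ : Fin k => y.divisors).filter
          (fun d => ∏ i, d i = y)).card : ℝ)
        ≤ 100 * (H:ℝ) ^ ((100:ℝ) * k * Real.log k / Real.log (Real.log y)) := by
      rcases eq_or_lt_of_le hk1 with hk1' | hk2
      · -- k = 1
        have hk1'' : k = 1 := hk1'.symm
        subst hk1''
        have h1 := D_card_one y
        have h2 : Real.log (1:ℕ) = 0 := by norm_num
        rw [h2]
        simp only [mul_zero, zero_div]
        rw [Real.rpow_zero]
        calc (((Fintype.piFinset fun _ : Fin 1 => y.divisors).filter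
              (fun d => ∏ i, d i = y)).card : ℝ) ≤ 1 := by exact_mod_cast h1
          _ ≤ 100 * 1 := by norm_num
      · -- k ≥ 2
        have hk2' : 2 ≤ k := hk2
        have hkne : k ≠ 0 := by omega
        set T : ℕ := max 2 ⌈Real.log y / (Real.log (Real.log y))^4⌉₊ with hT
        have hT2 : 2 ≤ T := le_max_left _ _
        have step1 : (((Fintype.piFinset fun _ : Fin k => y.divisors).filter
              (fun d => ∏ i, d i = y)).card : ℕ)
            ≤ (Nat.log 2 y + 1)^(k*T) * k^(Nat.log T y) :=
          (D_le_prod k y hy0).trans (prod_adt_le k y T hy0 hkne hT2)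
        calc (((Fintype.piFinset fun _ : Fin k => y.divisors).filter
              (fun d => ∏ i, d i = y)).card : ℝ)
            ≤ (((Nat.log 2 y + 1)^(k*T) * k^(Nat.log T y) : ℕ) : ℝ) := by exact_mod_cast step1
          _ ≤ (H:ℝ) ^ ((100:ℝ) * k * Real.log k / Real.log (Real.log y)) :=
              analytic_bound y H k hy2 hH hk2' hLL hL hkLL hcase
          _ ≤ 100 * (H:ℝ) ^ ((100:ℝ) * k * Real.log k / Real.log (Real.log y)) := by
              nlinarith [Real.rpow_pos_of_pos hHpos ((100:ℝ) * k * Real.log k / Real.log (Real.log y))]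
    calc (NkHy k H y : ℝ) ≤ _ := hNk
      _ ≤ (100 * (H:ℝ) ^ ((100:ℝ) * k * Real.log k / Real.log (Real.log y)))
            * (2*(H:ℝ))^k / y := by
          gcongr
      _ = 100 * (2 * (H : ℝ)) ^ k *
          (H : ℝ) ^ ((100:ℝ) * (k : ℝ) * Real.log k / Real.log (Real.log y)) / (y : ℝ) := by
          ring
  · -- y > H^k : count is zero
    rw [NkHy_zero k H y (by omega)]
    have : (0:ℝ) ≤ 100 * (2 * (H : ℝ)) ^ k *
        (H : ℝ) ^ ((100:ℝ) * (k : ℝ) * Real.log k / Real.log (Real.log y)) / (y : ℝ) := by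
      positivity
    simpa using this
end

section
/- For all integers k, H, y ≥ 1, the number N_k(H; y) of integer tuples (h₁, h₂, …, h_k) ∈ ([−H, H] ∩ ℤ)^k with y | h₁h₂⋯h_k and h₁h₂⋯h_k ≠ 0 satisfies N_k(H; y) ≤ τ_k(y) · (2H)^k / y; moreover N_k(H; y) = 0 whenever y > H^k. -/
/-- `τ_k(n)`: the number of `k`-tuples of positive integers with product `n`. -/
noncomputable def tauNat (k n : ℕ) : ℕ :=
  Nat.card {d : Fin k → ℕ // (∀ i, 0 < d i) ∧ ∏ i, d i = n}

open Finset

/-- Splitting a divisor of a finite product into a pointwise factorization. -/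
lemma exists_factorization {ι : Type*} (s : Finset ι) (n : ι → ℕ) (y : ℕ)
    (h : y ∣ ∏ i ∈ s, n i) :
    ∃ d : ι → ℕ, (∏ i ∈ s, d i = y) ∧ ∀ i ∈ s, d i ∣ n i := by
  classical
  induction s using Finset.cons_induction generalizing y with
  | empty =>
      simp only [Finset.prod_empty, Nat.dvd_one] at h
      exact ⟨fun _ => 1, by simp [h], by simp⟩
  | cons a s ha ih =>
      rw [Finset.prod_cons] at h
      obtain ⟨d₁, d₂, hd₁, hd₂, hy⟩ := exists_dvd_and_dvd_of_dvd_mul h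
      obtain ⟨d, hd, hdvd⟩ := ih d₂ hd₂
      refine ⟨Function.update d a d₁, ?_, ?_⟩
      · rw [Finset.prod_cons, Function.update_self,
          Finset.prod_update_of_notMem ha, hd, hy]
      · intro i hi
        rcases Finset.mem_cons.mp hi with rfl | hi2
        · rwa [Function.update_self]
        · rw [Function.update_of_ne (by rintro rfl; exact ha hi2)]
          exact hdvd i hi2

/-- Count of nonzero multiples of `d` in `[-H, H]`. -/
lemma mult_count_le (H d : ℕ) (hd : 0 < d) :
    ((Finset.Icc (-(H:ℤ)) (H:ℤ)).filter (fun x => (d:ℤ) ∣ x ∧ x ≠ 0)).card * d ≤ 2 * H := by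
  have h1 : ((Finset.Icc (-(H:ℤ)) (H:ℤ)).filter (fun x => (d:ℤ) ∣ x ∧ x ≠ 0)).card
      ≤ ((Finset.Icc (-((H/d : ℕ):ℤ)) ((H/d : ℕ):ℤ)).erase 0).card := by
    refine Finset.card_le_card_of_injOn (fun x => x / (d:ℤ)) ?_ ?_
    · intro x hx
      simp only [Finset.mem_coe, Finset.mem_filter, Finset.mem_Icc] at hx
      obtain ⟨⟨hx1, hx2⟩, hdvd, hne⟩ := hx
      obtain ⟨q, rfl⟩ := hdvd
      have hq : q ≠ 0 := by rintro rfl; simp at hne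
      have hdq : ((d:ℤ) * q) / d = q :=
        Int.mul_ediv_cancel_left _ (by exact_mod_cast hd.ne')
      have habs : d * q.natAbs ≤ H := by
        have h0 : ((d * q.natAbs : ℕ) : ℤ) ≤ (H:ℤ) := by
          push_cast
          rcases abs_cases q with ⟨hq1, _⟩ | ⟨hq1, _⟩ <;> rw [hq1] <;> linarith
        exact_mod_cast h0
      have hqm : q.natAbs ≤ H / d :=
        (Nat.le_div_iff_mul_le hd).mpr (by rwa [Nat.mul_comm])
      have hq2 : (q.natAbs : ℤ) ≤ ((H/d : ℕ) : ℤ) := by exact_mod_cast hqm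
      simp only [hdq, Finset.mem_coe, Finset.mem_erase, Finset.mem_Icc]
      rcases Int.natAbs_eq q with h | h
      · exact ⟨hq, by omega, by omega⟩
      · exact ⟨hq, by omega, by omega⟩
    · intro x hx x' hx' hxy
      simp only [Finset.coe_filter, Set.mem_setOf_eq] at hx hx'
      obtain ⟨-, hdvd, -⟩ := hx
      obtain ⟨-, hdvd', -⟩ := hx'
      have e1 := Int.ediv_mul_cancel hdvd
      have e2 := Int.ediv_mul_cancel hdvd'
      have e3 : x / (d:ℤ) * d = x' / (d:ℤ) * d := congrArg (· * (d:ℤ)) hxy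
      rw [e1, e2] at e3
      exact e3
  have h2 : ((Finset.Icc (-((H/d : ℕ):ℤ)) ((H/d : ℕ):ℤ)).erase 0).card = 2 * (H / d) := by
    rw [Finset.card_erase_of_mem (by rw [Finset.mem_Icc]; constructor <;> simp <;> exact Int.ediv_nonneg (Int.natCast_nonneg H) (Int.natCast_nonneg d)), Int.card_Icc]
    omega
  have h3 := Nat.div_mul_le_self H d
  calc ((Finset.Icc (-(H:ℤ)) (H:ℤ)).filter (fun x => (d:ℤ) ∣ x ∧ x ≠ 0)).card * d
      ≤ (2 * (H / d)) * d := by rw [← h2]; exact Nat.mul_le_mul_right d h1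
    _ = 2 * (H / d * d) := by ring
    _ ≤ 2 * H := by omega

/-- `N_k(H; y) ≤ τ_k(y) · (2H)^k / y`, and `N_k(H; y) = 0` if `y > H^k`. -/
theorem stmt5 (k H y : ℕ) (hk : 1 ≤ k) (hH : 1 ≤ H) (hy : 1 ≤ y) :
    ((NkHy k H y : ℝ) ≤ (tauNat k y : ℝ) * (2 * (H : ℝ)) ^ k / (y : ℝ)) ∧
    (H ^ k < y → NkHy k H y = 0) := by
  classical
  set S : Finset (Fin k → ℤ) :=
    (Fintype.piFinset fun _ => Finset.Icc (-(H:ℤ)) (H:ℤ)).filter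
      (fun h => (y : ℤ) ∣ ∏ i, h i ∧ (∏ i, h i) ≠ 0) with hS
  have hNS : NkHy k H y = S.card := by
    rw [NkHy, ← Nat.card_eq_finsetCard]
    apply Nat.card_congr
    apply Equiv.subtypeEquivRight
    intro h
    simp [hS, Fintype.mem_piFinset, and_assoc]
  set F : Finset (Fin k → ℕ) :=
    (Fintype.piFinset fun _ => Finset.Icc 1 y).filter
      (fun d => (∀ i, 0 < d i) ∧ ∏ i, d i = y) with hF
  have hTF : tauNat k y = F.card := by
    rw [tauNat, ← Nat.card_eq_finsetCard]
    apply Nat.card_congr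
    apply Equiv.subtypeEquivRight
    intro d
    simp only [hF, Finset.mem_filter, Fintype.mem_piFinset, Finset.mem_Icc]
    constructor
    · rintro ⟨hpos, hprod⟩
      refine ⟨fun i => ⟨hpos i, ?_⟩, hpos, hprod⟩
      exact Nat.le_of_dvd hy (hprod ▸ Finset.dvd_prod_of_mem d (Finset.mem_univ i))
    · rintro ⟨-, hpos, hprod⟩; exact ⟨hpos, hprod⟩
  have claim2 : H ^ k < y → NkHy k H y = 0 := by
    intro hlt
    rw [hNS, Finset.card_eq_zero, Finset.eq_empty_iff_forall_notMem]
    intro h hh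
    simp only [hS, Finset.mem_filter, Fintype.mem_piFinset, Finset.mem_Icc] at hh
    obtain ⟨hmem, hdvd, hne⟩ := hh
    have h1 : (y : ℤ) ≤ |∏ i, h i| := Int.le_of_dvd (abs_pos.mpr hne) ((dvd_abs _ _).mpr hdvd)
    have h2 : |∏ i, h i| ≤ (H : ℤ) ^ k := by
      rw [Finset.abs_prod]
      calc ∏ i, |h i| ≤ ∏ _i : Fin k, (H : ℤ) := by
            apply Finset.prod_le_prod (fun i _ => abs_nonneg _)
            intro i _
            have := hmem i
            rw [abs_le]; omega
        _ = (H : ℤ) ^ k := by simp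
    have h3 : (y : ℤ) ≤ (H : ℤ) ^ k := h1.trans h2
    have h4 : ((H ^ k : ℕ) : ℤ) < (y : ℤ) := by exact_mod_cast hlt
    push_cast at h4
    omega
  refine ⟨?_, claim2⟩
  set M : (Fin k → ℕ) → Finset (Fin k → ℤ) := fun d =>
    Fintype.piFinset fun i => (Finset.Icc (-(H:ℤ)) (H:ℤ)).filter
      (fun x => (d i : ℤ) ∣ x ∧ x ≠ 0) with hM
  have hcover : S ⊆ F.biUnion M := by
    intro h hh
    simp only [hS, Finset.mem_filter, Fintype.mem_piFinset] at hh
    obtain ⟨hmem, hdvd, hne⟩ := hh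
    have hdvd' : y ∣ ∏ i, (h i).natAbs := by
      rw [← Int.natCast_dvd_natCast, Nat.cast_prod]
      have he : ∏ i, ((h i).natAbs : ℤ) = |∏ i, h i| := by
        rw [Finset.abs_prod]
        exact Finset.prod_congr rfl fun i _ => Int.natCast_natAbs (h i)
      rw [he]
      exact (dvd_abs _ _).mpr hdvd
    obtain ⟨d, hdprod, hddvd⟩ := exists_factorization Finset.univ (fun i => (h i).natAbs) y hdvd'
    have hdpos : ∀ i, 0 < d i := by
      intro i
      rcases Nat.eq_zero_or_pos (d i) with h0 | h0
      · exfalso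
        have : ∏ j, d j = 0 := Finset.prod_eq_zero (Finset.mem_univ i) h0
        omega
      · exact h0
    rw [Finset.mem_biUnion]
    refine ⟨d, ?_, ?_⟩
    · simp only [hF, Finset.mem_filter, Fintype.mem_piFinset, Finset.mem_Icc]
      exact ⟨fun i => ⟨hdpos i,
        Nat.le_of_dvd hy (hdprod ▸ Finset.dvd_prod_of_mem d (Finset.mem_univ i))⟩,
        hdpos, hdprod⟩
    · simp only [hM, Fintype.mem_piFinset, Finset.mem_filter]
      intro i
      refine ⟨hmem i, ?_, fun h0 => hne (Finset.prod_eq_zero (Finset.mem_univ i) h0)⟩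
      rw [Int.natCast_dvd]
      exact hddvd i (Finset.mem_univ i)
  have hMcard : ∀ d ∈ F, (M d).card * y ≤ (2 * H) ^ k := by
    intro d hd
    simp only [hF, Finset.mem_filter] at hd
    obtain ⟨-, hdpos, hdprod⟩ := hd
    rw [hM]
    rw [Fintype.card_piFinset, ← hdprod, ← Finset.prod_mul_distrib]
    calc ∏ i, ((Finset.Icc (-(H:ℤ)) (H:ℤ)).filter
            (fun x => (d i : ℤ) ∣ x ∧ x ≠ 0)).card * d i
        ≤ ∏ _i : Fin k, 2 * H :=
          Finset.prod_le_prod' fun i _ => mult_count_le H (d i) (hdpos i)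
      _ = (2 * H) ^ k := by simp
  have hmain : S.card * y ≤ F.card * (2 * H) ^ k := by
    calc S.card * y ≤ (F.biUnion M).card * y :=
          Nat.mul_le_mul_right y (Finset.card_le_card hcover)
      _ ≤ (∑ d ∈ F, (M d).card) * y := Nat.mul_le_mul_right y (Finset.card_biUnion_le)
      _ = ∑ d ∈ F, (M d).card * y := Finset.sum_mul ..
      _ ≤ ∑ _d ∈ F, (2 * H) ^ k := Finset.sum_le_sum hMcard
      _ = F.card * (2 * H) ^ k := by rw [Finset.sum_const, smul_eq_mul]
  rw [hNS, hTF, le_div_iff₀ (by exact_mod_cast hy : (0:ℝ) < y)]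
  calc (S.card : ℝ) * y = ((S.card * y : ℕ) : ℝ) := by push_cast; ring
    _ ≤ ((F.card * (2 * H) ^ k : ℕ) : ℝ) := by exact_mod_cast hmain
    _ = (F.card : ℝ) * (2 * (H:ℝ)) ^ k := by push_cast; ring
end

section
/- For every integer k ≥ 1 there exist a constant C_k > 0 and a threshold x₀(k) such that for all integers x ≥ x₀(k) and H ≥ 1 with H ≤ x^{1 − 1/(100k)}, the number N_k(x, H) of nontrivial solutions satisfies N_k(x, H) ≤ C_k · H^k · (H/x)^{1/2}. -/
open Finset

lemma aux_two_pow (a : ℕ) : a + 1 ≤ 2 ^ a := Nat.lt_two_pow_self (n := a)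

lemma aux_16J (J : ℕ) (hJ : 1 ≤ J) : 4 * J ^ 2 + J ≤ 16 ^ J := by
  induction J with
  | zero => omega
  | succ n ih =>
    rcases Nat.eq_or_lt_of_le hJ with h | h
    · simp [← h]
    · have hn : 1 ≤ n := by omega
      have := ih hn
      have h16 : 16 ^ (n + 1) = 16 * 16 ^ n := by ring
      nlinarith [pow_pos (show 0 < 16 by norm_num) n]

lemma aux_JM (J m : ℕ) (hJ : 1 ≤ J) (hm : 4 * J ≤ m) : J * (m + 1) ≤ 2 ^ m := by
  induction m with
  | zero => omega
  | succ n ih =>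
    rcases Nat.eq_or_lt_of_le hm with h | h
    · have : 2 ^ (4 * J) = 16 ^ J := by
        rw [pow_mul]; norm_num
      rw [← h, this]
      have := aux_16J J hJ
      nlinarith
    · have hn : 4 * J ≤ n := by omega
      have := ih hn
      have : 2 ^ (n + 1) = 2 * 2 ^ n := by ring
      nlinarith

lemma aux_poly (J a : ℕ) (hJ : 1 ≤ J) : (a + 1) ^ J ≤ (4 * J ^ 2) ^ J * 2 ^ a := by
  rcases le_or_gt (a + 1) (4 * J ^ 2) with h | h
  · calc (a + 1) ^ J ≤ (4 * J ^ 2) ^ J := Nat.pow_le_pow_left h J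
    _ ≤ (4 * J ^ 2) ^ J * 2 ^ a := Nat.le_mul_of_pos_right _ (Nat.pow_pos (by norm_num))
  · have ha : 4 * J ^ 2 ≤ a := by omega
    have hJ0 : 0 < J := hJ
    have hm : 4 * J ≤ a / J := by
      rw [Nat.le_div_iff_mul_le hJ0]
      nlinarith
    have h1 : a + 1 ≤ J * (a / J + 1) := by
      have := Nat.div_add_mod a J
      have := Nat.mod_lt a hJ0
      nlinarith [Nat.div_add_mod a J]
    have h2 : a + 1 ≤ 2 ^ (a / J) := le_trans h1 (aux_JM J (a / J) hJ hm)
    calc (a + 1) ^ J ≤ (2 ^ (a / J)) ^ J := Nat.pow_le_pow_left h2 J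
    _ = 2 ^ (a / J * J) := by rw [← pow_mul]
    _ ≤ 2 ^ a := Nat.pow_le_pow_right (by norm_num) (Nat.div_mul_le_self a J)
    _ ≤ (4 * J ^ 2) ^ J * 2 ^ a := Nat.le_mul_of_pos_left _ (Nat.pow_pos (by positivity))

lemma divisor_bound (J : ℕ) (hJ : 1 ≤ J) :
    ∃ κ : ℕ, 1 ≤ κ ∧ ∀ n : ℕ, n ≠ 0 → (#n.divisors) ^ J ≤ κ * n := by
  set B := (4 * J ^ 2) ^ J with hB
  have hB1 : 1 ≤ B := Nat.one_le_pow _ _ (by positivity)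
  refine ⟨B ^ (2 ^ J), Nat.one_le_pow _ _ (by omega), fun n hn => ?_⟩
  rw [Nat.card_divisors hn]
  have hprod : ∏ p ∈ n.primeFactors, p ^ n.factorization p = n := by
    conv_rhs => rw [← Nat.factorization_prod_pow_eq_self hn]
    rw [Finsupp.prod, Nat.support_factorization]
  have hstep : ∀ p ∈ n.primeFactors,
      (n.factorization p + 1) ^ J ≤ (if p < 2 ^ J then B else 1) * p ^ n.factorization p := by
    intro p hp
    have hpp : p.Prime := Nat.prime_of_mem_primeFactors hp
    set a := n.factorization p
    by_cases hcase : p < 2 ^ J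
    · simp only [hcase, if_pos]
      calc (a + 1) ^ J ≤ B * 2 ^ a := aux_poly J a hJ
      _ ≤ B * p ^ a := Nat.mul_le_mul_left _ (Nat.pow_le_pow_left hpp.two_le a)
    · push_neg at hcase
      simp only [hcase.not_gt, if_neg, one_mul, not_false_iff]
      calc (a + 1) ^ J ≤ (2 ^ a) ^ J := Nat.pow_le_pow_left (aux_two_pow a) J
      _ = (2 ^ J) ^ a := by rw [← pow_mul, ← pow_mul, Nat.mul_comm]
      _ ≤ p ^ a := Nat.pow_le_pow_left hcase a
  calc (∏ p ∈ n.primeFactors, (n.factorization p + 1)) ^ J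
      = ∏ p ∈ n.primeFactors, (n.factorization p + 1) ^ J := by rw [Finset.prod_pow]
    _ ≤ ∏ p ∈ n.primeFactors, (if p < 2 ^ J then B else 1) * p ^ n.factorization p :=
        Finset.prod_le_prod' hstep
    _ = (∏ p ∈ n.primeFactors, if p < 2 ^ J then B else 1) *
          ∏ p ∈ n.primeFactors, p ^ n.factorization p := Finset.prod_mul_distrib
    _ ≤ B ^ (2 ^ J) * n := by
        rw [hprod]
        refine Nat.mul_le_mul_right _ ?_
        rw [← Finset.prod_filter]
        rw [Finset.prod_const]
        refine le_trans (Nat.pow_le_pow_right hB1 ?_) (le_refl _)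
        calc #{p ∈ n.primeFactors | p < 2 ^ J} ≤ #(Finset.range (2 ^ J)) := by
              apply Finset.card_le_card
              intro q hq
              simp only [Finset.mem_filter] at hq
              exact Finset.mem_range.mpr hq.2
        _ = 2 ^ J := Finset.card_range _

/-- `N_k(x, H)`: the number of nontrivial solutions
`(n₁,…,n_{2k}) ∈ ((x, x+H] ∩ ℤ)^{2k}` of `n₁⋯n_k = n_{k+1}⋯n_{2k}`, where a solution
is trivial iff the multiset `{n₁,…,n_k}` equals the multiset `{n_{k+1},…,n_{2k}}`.
Here `p.1 i = n_i` and `p.2 i = n_{k+i}`. -/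
noncomputable def NkCount (k x H : ℕ) : ℕ :=
  Nat.card {p : (Fin k → ℕ) × (Fin k → ℕ) //
    (∀ i, p.1 i ∈ Finset.Ioc x (x + H)) ∧ (∀ i, p.2 i ∈ Finset.Ioc x (x + H)) ∧
    (∏ i, p.1 i) = (∏ i, p.2 i) ∧
    Multiset.map p.1 Finset.univ.val ≠ Multiset.map p.2 Finset.univ.val}

def solsF (j x H : ℕ) : Finset ((Fin j → ℕ) × (Fin j → ℕ)) :=
  ((Fintype.piFinset fun _ => Finset.Ioc x (x + H)) ×ˢ
    (Fintype.piFinset fun _ => Finset.Ioc x (x + H))).filter fun p =>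
      (∏ i, p.1 i) = (∏ i, p.2 i) ∧
      Multiset.map p.1 Finset.univ.val ≠ Multiset.map p.2 Finset.univ.val

lemma mem_solsF {j x H : ℕ} {p : (Fin j → ℕ) × (Fin j → ℕ)} :
    p ∈ solsF j x H ↔ (∀ i, p.1 i ∈ Finset.Ioc x (x + H)) ∧
      (∀ i, p.2 i ∈ Finset.Ioc x (x + H)) ∧ (∏ i, p.1 i) = (∏ i, p.2 i) ∧
      Multiset.map p.1 Finset.univ.val ≠ Multiset.map p.2 Finset.univ.val := by
  simp [solsF, Fintype.mem_piFinset, and_assoc]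

lemma NkCount_eq (j x H : ℕ) : NkCount j x H = #(solsF j x H) := by
  rw [NkCount, ← Nat.card_eq_finsetCard]
  exact Nat.card_congr (Equiv.subtypeEquivRight fun p => mem_solsF.symm)

lemma stepA (j x H m₁ : ℕ) (c : Fin (j + 1) → ℕ) (Rr : ℝ) (hRr : 0 ≤ Rr)
    (A : Finset ((Fin (j + 1) → ℕ) × (Fin (j + 1) → ℕ)))
    (hA : ∀ p ∈ A, p ∈ solsF (j + 1) x H ∧ p.2 0 = m₁ ∧ ∀ i, c i ∣ p.1 i)
    (hR : ∀ n : Fin (j + 1) → ℕ, (∀ i, n i ∈ Finset.Ioc x (x + H)) →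
      ((#({d ∈ Finset.Ioc x (x + H) | d ∣ ∏ i, n i}) : ℝ)) ^ j ≤ Rr) :
    (#A : ℝ) ≤ (∏ i, (#({n ∈ Finset.Ioc x (x + H) | c i ∣ n}) : ℝ)) * Rr := by
  classical
  set NN := Fintype.piFinset (fun i => ({n ∈ Finset.Ioc x (x + H) | c i ∣ n})) with hNN
  have hfib : #A = ∑ n ∈ NN, #(A.filter fun p => p.1 = n) := by
    apply Finset.card_eq_sum_card_fiberwise
    intro p hp
    obtain ⟨hps, -, hdvd⟩ := hA p hp
    rw [mem_solsF] at hps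
    rw [hNN, Finset.mem_coe, Fintype.mem_piFinset]
    exact fun i => Finset.mem_filter.mpr ⟨hps.1 i, hdvd i⟩
  have hfibcard : ∀ n ∈ NN, (#(A.filter fun p => p.1 = n) : ℝ) ≤ Rr := by
    intro n hn
    rw [hNN, Fintype.mem_piFinset] at hn
    have hnI : ∀ i, n i ∈ Finset.Ioc x (x + H) := fun i => (Finset.mem_filter.mp (hn i)).1
    have hcard : #(A.filter fun p => p.1 = n) ≤
        #(Fintype.piFinset (fun _ : Fin j => ({d ∈ Finset.Ioc x (x + H) | d ∣ ∏ i, n i}))) := by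
      apply Finset.card_le_card_of_injOn (fun p => fun t : Fin j => p.2 t.succ)
      · intro p hp
        rw [Finset.mem_coe, Finset.mem_filter] at hp
        obtain ⟨hpA, hp1⟩ := hp
        obtain ⟨hps, hm, hdvd⟩ := hA p hpA
        rw [mem_solsF] at hps
        rw [Finset.mem_coe, Fintype.mem_piFinset]
        intro t
        refine Finset.mem_filter.mpr ⟨hps.2.1 t.succ, ?_⟩
        have h1 : p.2 t.succ ∣ ∏ i, p.2 i := Finset.dvd_prod_of_mem _ (Finset.mem_univ _)
        rw [← hps.2.2.1, hp1] at h1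
        exact h1
      · intro p hp q hq hpq
        rw [Finset.coe_filter, Set.mem_setOf_eq] at hp hq
        obtain ⟨hpA, hp1⟩ := hp
        obtain ⟨hqA, hq1⟩ := hq
        have e1 : p.1 = q.1 := by rw [hp1, hq1]
        have e2 : p.2 = q.2 := by
          funext i
          refine Fin.cases ?_ (fun t => ?_) i
          · rw [(hA p hpA).2.1, (hA q hqA).2.1]
          · exact congrFun hpq t
        exact Prod.ext e1 e2
    have hpi : #(Fintype.piFinset (fun _ : Fin j => ({d ∈ Finset.Ioc x (x + H) | d ∣ ∏ i, n i})))
        = (#({d ∈ Finset.Ioc x (x + H) | d ∣ ∏ i, n i})) ^ j := by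
      rw [Fintype.card_piFinset]
      rw [Finset.prod_const, Finset.card_univ, Fintype.card_fin]
    calc (#(A.filter fun p => p.1 = n) : ℝ) ≤
        ((#({d ∈ Finset.Ioc x (x + H) | d ∣ ∏ i, n i})) ^ j : ℕ) := by
          exact_mod_cast hpi ▸ hcard
    _ = ((#({d ∈ Finset.Ioc x (x + H) | d ∣ ∏ i, n i})) : ℝ) ^ j := by push_cast; ring
    _ ≤ Rr := hR n hnI
  have hNNcard : (#NN : ℝ) = ∏ i, (#({n ∈ Finset.Ioc x (x + H) | c i ∣ n}) : ℝ) := by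
    rw [hNN, Fintype.card_piFinset]
    push_cast
    rfl
  calc (#A : ℝ) = ∑ n ∈ NN, (#(A.filter fun p => p.1 = n) : ℝ) := by
        rw [hfib]; push_cast; rfl
  _ ≤ ∑ _n ∈ NN, Rr := Finset.sum_le_sum hfibcard
  _ = #NN * Rr := by rw [Finset.sum_const, nsmul_eq_mul]
  _ = (∏ i, (#({n ∈ Finset.Ioc x (x + H) | c i ∣ n}) : ℝ)) * Rr := by rw [hNNcard]

-- number of multiples of c in (x, x+H]
lemma mult_count_mul (x H c : ℕ) (hc : 0 < c) :
    #({n ∈ Finset.Ioc x (x + H) | c ∣ n}) * c ≤ H + c := by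
  have hinj : Set.InjOn (· / c) ({n ∈ Finset.Ioc x (x + H) | c ∣ n} : Finset ℕ) := by
    intro a ha b hb hab
    simp only [Finset.coe_filter, Set.mem_setOf_eq, Finset.mem_Ioc] at ha hb
    obtain ⟨-, ca⟩ := ha; obtain ⟨-, cb⟩ := hb
    have hab' : a / c = b / c := hab
    rw [← Nat.div_mul_cancel ca, ← Nat.div_mul_cancel cb, hab']
  have hmap : ∀ n ∈ ({n ∈ Finset.Ioc x (x + H) | c ∣ n} : Finset ℕ),
      n / c ∈ Finset.Ioc (x / c) ((x + H) / c) := by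
    intro n hn
    simp only [Finset.mem_filter, Finset.mem_Ioc] at hn
    obtain ⟨⟨h1, h2⟩, hdvd⟩ := hn
    refine Finset.mem_Ioc.mpr ⟨?_, Nat.div_le_div_right h2⟩
    by_contra hcon
    push_neg at hcon
    have e1 : n = c * (n / c) := (Nat.mul_div_cancel' hdvd).symm
    have e2 : n ≤ c * (x / c) := by
      calc n = c * (n / c) := e1
      _ ≤ c * (x / c) := Nat.mul_le_mul_left c hcon
    have : n ≤ x := le_trans e2 (Nat.mul_div_le x c)
    omega
  have hcard : #({n ∈ Finset.Ioc x (x + H) | c ∣ n}) ≤ (x + H) / c - x / c := by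
    calc #({n ∈ Finset.Ioc x (x + H) | c ∣ n}) ≤ #(Finset.Ioc (x / c) ((x + H) / c)) :=
          Finset.card_le_card_of_injOn _ hmap hinj
    _ = (x + H) / c - x / c := Nat.card_Ioc _ _
  have key : ((x + H) / c - x / c) * c ≤ H + c := by
    rw [tsub_mul]
    obtain ⟨u, hu⟩ : ∃ u, (x + H) / c * c = u := ⟨_, rfl⟩
    obtain ⟨v, hv⟩ : ∃ v, x / c * c = v := ⟨_, rfl⟩
    have h1 : u ≤ x + H := by rw [← hu]; exact Nat.div_mul_le_self _ _
    have h2 : x < v + c := by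
      have hm := Nat.div_add_mod x c
      have hm2 := Nat.mod_lt x hc
      have h2' : x < c * (x / c) + c := by omega
      rw [← hv, Nat.mul_comm (x / c) c]
      exact h2' 
    rw [hu, hv]
    omega
  calc #({n ∈ Finset.Ioc x (x + H) | c ∣ n}) * c ≤ ((x + H) / c - x / c) * c :=
        Nat.mul_le_mul_right c hcard
  _ ≤ H + c := key

lemma mult_count_real (x H c : ℕ) (hc : 1 ≤ c) (hcH : c ≤ H) :
    (#({n ∈ Finset.Ioc x (x + H) | c ∣ n}) : ℝ) ≤ 2 * H / c := by
  have h1 := mult_count_mul x H c hc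
  have hc0 : (0 : ℝ) < c := by exact_mod_cast hc
  rw [le_div_iff₀ hc0]
  have h2 : (#({n ∈ Finset.Ioc x (x + H) | c ∣ n}) : ℝ) * c ≤ (H : ℝ) + c := by
    exact_mod_cast h1
  have h3 : (c : ℝ) ≤ H := by exact_mod_cast hcH
  linarith

lemma pow_div_le {a M J t : ℕ} (hJ : 1 ≤ J) (hM : 1 ≤ M) (h : a ^ J ≤ M) :
    (a : ℝ) ^ t ≤ (M : ℝ) ^ ((t : ℝ) / J) := by
  have ha : (a : ℝ) ≤ (M : ℝ) ^ ((1 : ℝ) / J) := by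
    have h0 : (0 : ℝ) ≤ (a : ℝ) := Nat.cast_nonneg a
    have hJ0 : (0 : ℝ) < J := by exact_mod_cast hJ
    have h1 : ((a : ℝ) ^ (J : ℕ)) ^ ((1 : ℝ) / J) ≤ (M : ℝ) ^ ((1 : ℝ) / J) := by
      apply Real.rpow_le_rpow (by positivity) (by exact_mod_cast h) (by positivity)
    rwa [← Real.rpow_natCast (a : ℝ) J, ← Real.rpow_mul h0, mul_one_div,
      div_self (ne_of_gt hJ0), Real.rpow_one] at h1
  calc (a : ℝ) ^ t ≤ ((M : ℝ) ^ ((1 : ℝ) / J)) ^ t := by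
        apply pow_le_pow_left₀ (Nat.cast_nonneg a) ha
  _ = (M : ℝ) ^ ((t : ℝ) / J) := by
      rw [← Real.rpow_natCast ((M : ℝ) ^ ((1 : ℝ) / J)) t, ← Real.rpow_mul (by positivity),
        one_div, inv_mul_eq_div]

lemma facto : ∀ {j : ℕ} (n : Fin j → ℕ) (m : ℕ), m ∣ ∏ i, n i →
    ∃ c : Fin j → ℕ, (∀ i, c i ∣ n i) ∧ ∏ i, c i = m := by
  intro j
  induction j with
  | zero =>
    intro n m h
    simp only [Finset.univ_eq_empty, Finset.prod_empty, Nat.dvd_one] at h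
    exact ⟨fun _ => 1, fun i => i.elim0, by simp [h]⟩
  | succ j ih =>
    intro n m h
    rw [Fin.prod_univ_succ] at h
    obtain ⟨d₁, d₂, hd₁, hd₂, rfl⟩ := exists_dvd_and_dvd_of_dvd_mul h
    obtain ⟨c, hc, hcp⟩ := ih (fun i => n i.succ) d₂ hd₂
    refine ⟨Fin.cons d₁ c, fun i => ?_, ?_⟩
    · refine Fin.cases ?_ (fun i' => ?_) i
      · simpa using hd₁
      · simpa using hc i'
    · rw [Fin.prod_univ_succ]
      simp [hcp]


lemma div_in_Ioc (x H N : ℕ) (hN : N ≠ 0) :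
    #({d ∈ Finset.Ioc x (x + H) | d ∣ N}) ≤ #N.divisors := by
  apply Finset.card_le_card
  intro d hd
  simp only [Finset.mem_filter] at hd
  exact Nat.mem_divisors.mpr ⟨hd.2, hN⟩

lemma disj_card (j x H J κ : ℕ) (hκ : 1 ≤ κ) (hJ : 1 ≤ J) (hx : 1 ≤ x) (hH : 1 ≤ H)
    (hdiv : ∀ n : ℕ, n ≠ 0 → (#n.divisors) ^ J ≤ κ * n) :
    (#({p ∈ solsF (j + 1) x H | ∀ i i', p.1 i ≠ p.2 i'}) : ℝ) ≤
      (H : ℝ) * ((κ : ℝ) * ((x : ℝ) + H)) ^ (((j : ℝ) + 1) / J) *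
        ((2 * (H : ℝ)) ^ (j + 1) / x) * ((κ : ℝ) * ((x : ℝ) + H) ^ (j + 1)) ^ ((j : ℝ) / J) := by
  classical
  have hx0 : (0 : ℝ) < x := by exact_mod_cast hx
  have hbase1 : (1 : ℝ) ≤ (κ : ℝ) * ((x : ℝ) + H) := by
    have h1 : (1 : ℝ) ≤ (κ : ℝ) := by exact_mod_cast hκ
    have h2 : (1 : ℝ) ≤ (x : ℝ) + H := by
      have : (1 : ℝ) ≤ (x : ℝ) := by exact_mod_cast hx
      have hH0 : (0 : ℝ) ≤ (H : ℝ) := Nat.cast_nonneg H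
      linarith
    nlinarith
  set Rr : ℝ := ((κ : ℝ) * ((x : ℝ) + H) ^ (j + 1)) ^ ((j : ℝ) / J) with hRrdef
  set Fr : ℝ := ((κ : ℝ) * ((x : ℝ) + H)) ^ (((j : ℝ) + 1) / J) with hFrdef
  have hRr0 : 0 ≤ Rr := by
    rw [hRrdef]; positivity
  have hFr0 : 0 ≤ Fr := by
    rw [hFrdef]; positivity
  -- the divisor-count bound used fiberwise
  have hR : ∀ n : Fin (j + 1) → ℕ, (∀ i, n i ∈ Finset.Ioc x (x + H)) →
      ((#({d ∈ Finset.Ioc x (x + H) | d ∣ ∏ i, n i}) : ℝ)) ^ j ≤ Rr := by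
    intro n hnI
    have hN0 : (∏ i, n i) ≠ 0 := by
      have hpos : 0 < ∏ i, n i := by
        apply Finset.prod_pos
        intro i _
        have := (Finset.mem_Ioc.mp (hnI i)).1
        omega
      exact hpos.ne' 
    have h2 : (∏ i, n i) ≤ (x + H) ^ (j + 1) := by
      calc (∏ i, n i) ≤ ∏ _i : Fin (j + 1), (x + H) := by
            apply Finset.prod_le_prod'
            intro i _
            exact (Finset.mem_Ioc.mp (hnI i)).2
      _ = (x + H) ^ (j + 1) := by
            rw [Finset.prod_const, Finset.card_univ, Fintype.card_fin]
    have h3 : (#({d ∈ Finset.Ioc x (x + H) | d ∣ ∏ i, n i})) ^ J ≤ κ * (x + H) ^ (j + 1) := by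
      calc (#({d ∈ Finset.Ioc x (x + H) | d ∣ ∏ i, n i})) ^ J
          ≤ (#(∏ i, n i).divisors) ^ J := Nat.pow_le_pow_left (div_in_Ioc x H _ hN0) J
      _ ≤ κ * (∏ i, n i) := hdiv _ hN0
      _ ≤ κ * (x + H) ^ (j + 1) := Nat.mul_le_mul_left κ h2
    have hM1 : 1 ≤ κ * (x + H) ^ (j + 1) := by
      have : 1 ≤ (x + H) ^ (j + 1) := Nat.one_le_pow _ _ (by omega)
      exact Nat.one_le_iff_ne_zero.mpr (by positivity)
    have h4 := pow_div_le hJ hM1 h3 (t := j)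
    calc ((#({d ∈ Finset.Ioc x (x + H) | d ∣ ∏ i, n i}) : ℝ)) ^ j
        ≤ ((κ * (x + H) ^ (j + 1) : ℕ) : ℝ) ^ ((j : ℝ) / J) := h4
    _ = Rr := by rw [hRrdef]; push_cast; ring_nf
  set D := ({p ∈ solsF (j + 1) x H | ∀ i i', p.1 i ≠ p.2 i'}) with hDdef
  have hsplit : #D = ∑ m₁ ∈ Finset.Ioc x (x + H), #(D.filter fun p => p.2 0 = m₁) := by
    apply Finset.card_eq_sum_card_fiberwise
    intro p hp
    rw [hDdef, Finset.mem_coe, Finset.mem_filter, mem_solsF] at hp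
    exact hp.1.2.1 0
  have hperm : ∀ m₁ ∈ Finset.Ioc x (x + H),
      (#(D.filter fun p => p.2 0 = m₁) : ℝ) ≤ Fr * ((2 * (H : ℝ)) ^ (j + 1) / x * Rr) := by
    intro m₁ hm₁
    obtain ⟨hm₁x, hm₁xH⟩ := Finset.mem_Ioc.mp hm₁
    have hm₁0 : m₁ ≠ 0 := by omega
    set Fact := ({c ∈ Fintype.piFinset (fun _ : Fin (j + 1) => Finset.Icc 1 H) |
      ∏ i, c i = m₁}) with hFactdef
    -- covering by factorizations
    have hcov : D.filter (fun p => p.2 0 = m₁) ⊆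
        Fact.biUnion (fun c => (D.filter fun p => p.2 0 = m₁).filter
          (fun p => ∀ i, c i ∣ p.1 i)) := by
      intro p hp
      have hp' := hp
      rw [Finset.mem_filter] at hp'
      obtain ⟨hpD, hpm⟩ := hp'
      rw [hDdef, Finset.mem_filter] at hpD
      obtain ⟨hps, hdis⟩ := hpD
      rw [mem_solsF] at hps
      obtain ⟨h1, h2, h3, h4⟩ := hps
      have hmdvd : m₁ ∣ ∏ i, p.1 i := by
        rw [h3, ← hpm]
        exact Finset.dvd_prod_of_mem _ (Finset.mem_univ _)
      obtain ⟨c, hcd, hcp⟩ := facto p.1 m₁ hmdvd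
      have hcmem : c ∈ Fact := by
        rw [hFactdef, Finset.mem_filter, Fintype.mem_piFinset]
        refine ⟨fun i => ?_, hcp⟩
        have hpos : 0 < p.1 i := by
          have := (Finset.mem_Ioc.mp (h1 i)).1; omega
        have hc1 : 1 ≤ c i := Nat.pos_of_dvd_of_pos (hcd i) hpos
        have hcm : c i ∣ m₁ := by
          rw [← hcp]; exact Finset.dvd_prod_of_mem _ (Finset.mem_univ _)
        have hne : p.1 i ≠ m₁ := by
          rw [← hpm]; exact hdis i 0
        have hI1 := Finset.mem_Ioc.mp (h1 i)
        -- c i divides the nonzero difference, which is < H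
        have hcH : c i ≤ H := by
          rcases Nat.lt_or_ge (p.1 i) m₁ with hlt | hge
          · have hd : c i ∣ m₁ - p.1 i := Nat.dvd_sub hcm (hcd i)
            have := Nat.le_of_dvd (by omega) hd
            omega
          · have hlt : m₁ < p.1 i := by omega
            have hd : c i ∣ p.1 i - m₁ := Nat.dvd_sub (hcd i) hcm
            have := Nat.le_of_dvd (by omega) hd
            omega
        exact Finset.mem_Icc.mpr ⟨hc1, hcH⟩
      exact Finset.mem_biUnion.mpr ⟨c, hcmem, Finset.mem_filter.mpr ⟨hp, hcd⟩⟩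
    have hcount : #(D.filter fun p => p.2 0 = m₁) ≤
        ∑ c ∈ Fact, #((D.filter fun p => p.2 0 = m₁).filter (fun p => ∀ i, c i ∣ p.1 i)) :=
      le_trans (Finset.card_le_card hcov) (Finset.card_biUnion_le)
    -- bound each inner card by stepA
    have hinner : ∀ c ∈ Fact,
        (#((D.filter fun p => p.2 0 = m₁).filter (fun p => ∀ i, c i ∣ p.1 i)) : ℝ) ≤
          (2 * (H : ℝ)) ^ (j + 1) / x * Rr := by
      intro c hc
      rw [hFactdef, Finset.mem_filter, Fintype.mem_piFinset] at hc
      obtain ⟨hcIcc, hcprod⟩ := hc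
      have hstep := stepA j x H m₁ c Rr hRr0
        ((D.filter fun p => p.2 0 = m₁).filter (fun p => ∀ i, c i ∣ p.1 i)) ?_ hR
      · refine le_trans hstep ?_
        have hmc : ∀ i : Fin (j + 1),
            (#({n ∈ Finset.Ioc x (x + H) | c i ∣ n}) : ℝ) ≤ 2 * (H : ℝ) / c i := by
          intro i
          have := Finset.mem_Icc.mp (hcIcc i)
          exact mult_count_real x H (c i) this.1 this.2
        have hprodmc : (∏ i, (#({n ∈ Finset.Ioc x (x + H) | c i ∣ n}) : ℝ)) ≤
            (2 * (H : ℝ)) ^ (j + 1) / m₁ := by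
          calc (∏ i, (#({n ∈ Finset.Ioc x (x + H) | c i ∣ n}) : ℝ))
              ≤ ∏ i, (2 * (H : ℝ) / c i) := by
                apply Finset.prod_le_prod
                · intro i _; positivity
                · intro i _; exact hmc i
          _ = (2 * (H : ℝ)) ^ (j + 1) / m₁ := by
                rw [Finset.prod_div_distrib]
                congr 1
                · rw [Finset.prod_const, Finset.card_univ, Fintype.card_fin]
                · rw [← Nat.cast_prod, hcprod]
        have hm₁r : (x : ℝ) ≤ m₁ := by exact_mod_cast le_of_lt hm₁x
        have hfinal : (∏ i, (#({n ∈ Finset.Ioc x (x + H) | c i ∣ n}) : ℝ)) ≤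
            (2 * (H : ℝ)) ^ (j + 1) / x := by
          refine le_trans hprodmc ?_
          gcongr
        exact mul_le_mul_of_nonneg_right hfinal hRr0
      · intro p hp
        rw [Finset.mem_filter] at hp
        obtain ⟨hp1, hp2⟩ := hp
        rw [Finset.mem_filter] at hp1
        obtain ⟨hp3, hp4⟩ := hp1
        rw [hDdef, Finset.mem_filter] at hp3
        exact ⟨hp3.1, hp4, hp2⟩
    -- count of factorizations
    have hFact : (#Fact : ℝ) ≤ Fr := by
      have hsub : Fact ⊆ Fintype.piFinset (fun _ : Fin (j + 1) => m₁.divisors) := by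
        intro c hc
        rw [hFactdef, Finset.mem_filter, Fintype.mem_piFinset] at hc
        rw [Fintype.mem_piFinset]
        intro i
        refine Nat.mem_divisors.mpr ⟨?_, hm₁0⟩
        rw [← hc.2]
        exact Finset.dvd_prod_of_mem _ (Finset.mem_univ _)
      have hcard1 : #Fact ≤ (#m₁.divisors) ^ (j + 1) := by
        calc #Fact ≤ #(Fintype.piFinset (fun _ : Fin (j + 1) => m₁.divisors)) :=
              Finset.card_le_card hsub
        _ = (#m₁.divisors) ^ (j + 1) := by
              rw [Fintype.card_piFinset, Finset.prod_const, Finset.card_univ, Fintype.card_fin]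
      have h3 : (#m₁.divisors) ^ J ≤ κ * (x + H) := by
        calc (#m₁.divisors) ^ J ≤ κ * m₁ := hdiv m₁ hm₁0
        _ ≤ κ * (x + H) := Nat.mul_le_mul_left κ hm₁xH
      have hM1 : 1 ≤ κ * (x + H) :=
        Nat.mul_pos hκ (lt_of_lt_of_le hx (Nat.le_add_right x H))
      have h4 := pow_div_le hJ hM1 h3 (t := j + 1)
      calc (#Fact : ℝ) ≤ ((#m₁.divisors) ^ (j + 1) : ℕ) := by exact_mod_cast hcard1
      _ = ((#m₁.divisors : ℝ)) ^ (j + 1) := by push_cast; ring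
      _ ≤ ((κ * (x + H) : ℕ) : ℝ) ^ (((j + 1 : ℕ) : ℝ) / (J : ℕ)) := h4
      _ = Fr := by rw [hFrdef]; push_cast; ring_nf
    -- combine
    calc (#(D.filter fun p => p.2 0 = m₁) : ℝ) ≤
        ∑ c ∈ Fact, (#((D.filter fun p => p.2 0 = m₁).filter (fun p => ∀ i, c i ∣ p.1 i)) : ℝ) := by
          exact_mod_cast hcount
    _ ≤ ∑ _c ∈ Fact, ((2 * (H : ℝ)) ^ (j + 1) / x * Rr) := Finset.sum_le_sum hinner
    _ = #Fact * ((2 * (H : ℝ)) ^ (j + 1) / x * Rr) := by rw [Finset.sum_const, nsmul_eq_mul]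
    _ ≤ Fr * ((2 * (H : ℝ)) ^ (j + 1) / x * Rr) := by
        apply mul_le_mul_of_nonneg_right hFact
        positivity
  -- total
  have hIcard : #(Finset.Ioc x (x + H)) = H := by
    rw [Nat.card_Ioc]; omega
  calc (#D : ℝ) = ∑ m₁ ∈ Finset.Ioc x (x + H), (#(D.filter fun p => p.2 0 = m₁) : ℝ) := by
        rw [hsplit]; push_cast; rfl
  _ ≤ ∑ _m₁ ∈ Finset.Ioc x (x + H), (Fr * ((2 * (H : ℝ)) ^ (j + 1) / x * Rr)) :=
      Finset.sum_le_sum hperm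
  _ = (H : ℝ) * (Fr * ((2 * (H : ℝ)) ^ (j + 1) / x * Rr)) := by
      rw [Finset.sum_const, nsmul_eq_mul, hIcard]
  _ = (H : ℝ) * ((κ : ℝ) * ((x : ℝ) + H)) ^ (((j : ℝ) + 1) / J) *
        ((2 * (H : ℝ)) ^ (j + 1) / x) * ((κ : ℝ) * ((x : ℝ) + H) ^ (j + 1)) ^ ((j : ℝ) / J) := by
      rw [hFrdef, hRrdef]; ring
lemma multiset_split {j : ℕ} (f : Fin (j + 1) → ℕ) (i : Fin (j + 1)) :
    Multiset.map f Finset.univ.val = f i ::ₘ Multiset.map (i.removeNth f) Finset.univ.val := by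
  rw [Fin.univ_succAbove _ i]
  rw [Finset.cons_val, Multiset.map_cons, Finset.map_val, Multiset.map_map]
  rfl

lemma coll_card (j x H : ℕ) :
    #({p ∈ solsF (j + 1) x H | ∃ i i', p.1 i = p.2 i'}) ≤
      (j + 1) * (j + 1) * H * #(solsF j x H) := by
  classical
  set T := ((Finset.univ : Finset (Fin (j + 1))) ×ˢ (Finset.univ : Finset (Fin (j + 1))) ×ˢ
    (Finset.Ioc x (x + H)) ×ˢ solsF j x H) with hT
  have hcard : #T = (j + 1) * (j + 1) * H * #(solsF j x H) := by
    simp only [hT, Finset.card_product, Finset.card_univ, Fintype.card_fin, Nat.card_Ioc]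
    have : x + H - x = H := by omega
    rw [this]; ring
  rw [← hcard]
  set F : ((Fin (j + 1) → ℕ) × (Fin (j + 1) → ℕ)) →
      (Fin (j + 1) × Fin (j + 1) × ℕ × ((Fin j → ℕ) × (Fin j → ℕ))) := fun p =>
    if h : ∃ i i', p.1 i = p.2 i' then
      (h.choose, h.choose_spec.choose, p.1 h.choose,
        (h.choose.removeNth p.1, h.choose_spec.choose.removeNth p.2))
    else default with hF
  apply Finset.card_le_card_of_injOn F
  · -- maps into T
    intro p hp
    rw [Finset.mem_coe, Finset.mem_filter] at hp
    obtain ⟨hps, hex⟩ := hp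
    rw [mem_solsF] at hps
    obtain ⟨h1, h2, h3, h4⟩ := hps
    rw [hF]
    simp only [dif_pos hex]
    set i := hex.choose
    set i' := hex.choose_spec.choose
    have hvv : p.1 i = p.2 i' := hex.choose_spec.choose_spec
    have hv1 : p.1 i ∈ Finset.Ioc x (x + H) := h1 i
    have hvpos : 0 < p.1 i := lt_of_le_of_lt (Nat.zero_le x) (Finset.mem_Ioc.mp hv1).1
    have hprod1 := Fin.prod_univ_succAbove p.1 i
    have hprod2 := Fin.prod_univ_succAbove p.2 i'
    have hsplit1 := multiset_split p.1 i
    have hsplit2 := multiset_split p.2 i'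
    refine Finset.mem_product.mpr ⟨Finset.mem_univ _, Finset.mem_product.mpr
      ⟨Finset.mem_univ _, Finset.mem_product.mpr ⟨hv1, ?_⟩⟩⟩
    rw [mem_solsF]
    refine ⟨fun t => h1 _, fun t => h2 _, ?_, ?_⟩
    · -- products of reduced are equal
      have : p.1 i * ∏ t, i.removeNth p.1 t = p.1 i * ∏ t, i'.removeNth p.2 t := by
        simp only [Fin.removeNth]
        rw [← hprod1, h3, hprod2, ← hvv]
      exact Nat.eq_of_mul_eq_mul_left hvpos this
    · -- multisets of reduced differ
      intro hcontra
      apply h4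
      rw [hsplit1, hsplit2, hvv, hcontra]
  · -- injectivity
    intro p hp q hq hpq
    rw [Finset.coe_filter, Set.mem_setOf_eq] at hp hq
    obtain ⟨-, hexp⟩ := hp
    obtain ⟨-, hexq⟩ := hq
    rw [hF] at hpq
    simp only [dif_pos hexp, dif_pos hexq, Prod.mk.injEq] at hpq
    obtain ⟨hi, hi', hv, hr1, hr2⟩ := hpq
    have hvp : p.1 hexp.choose = p.2 hexp.choose_spec.choose := hexp.choose_spec.choose_spec
    have hvq : q.1 hexq.choose = q.2 hexq.choose_spec.choose := hexq.choose_spec.choose_spec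
    have e1 : p.1 = q.1 := by
      rw [← Fin.insertNth_self_removeNth hexp.choose p.1, hr1, hv, hi,
        Fin.insertNth_self_removeNth]
    have hval : p.2 hexp.choose_spec.choose = q.2 hexq.choose_spec.choose := by
      rw [← hvp, ← hvq]; exact hv
    have e2 : p.2 = q.2 := by
      rw [← Fin.insertNth_self_removeNth hexp.choose_spec.choose p.2, hr2, hval, hi',
        Fin.insertNth_self_removeNth]
    exact Prod.ext e1 e2

lemma solsF_zero (x H : ℕ) : solsF 0 x H = ∅ := by
  ext p
  simp [mem_solsF]

lemma sols_split (j x H : ℕ) :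
    #(solsF (j + 1) x H) ≤ #({p ∈ solsF (j + 1) x H | ∃ i i', p.1 i = p.2 i'}) +
      #({p ∈ solsF (j + 1) x H | ∀ i i', p.1 i ≠ p.2 i'}) := by
  classical
  have h := Finset.card_filter_add_card_filter_not
    (s := solsF (j + 1) x H) (p := fun p => ∃ i i', p.1 i = p.2 i')
  have heq : {p ∈ solsF (j + 1) x H | ¬ ∃ i i', p.1 i = p.2 i'} =
      {p ∈ solsF (j + 1) x H | ∀ i i', p.1 i ≠ p.2 i'} := by
    apply Finset.filter_congr
    intro p _
    simp [not_exists]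
  rw [heq] at h
  omega

set_option maxHeartbeats 1000000 in
lemma main_ind (k J κ : ℕ) (hk : 1 ≤ k) (hJ : 1 ≤ J) (hκ : 1 ≤ κ)
    (hdiv : ∀ n : ℕ, n ≠ 0 → (#n.divisors) ^ J ≤ κ * n)
    (hJbig : 200 * k ^ 3 ≤ J) :
    ∀ j : ℕ, j ≤ k → ∃ C : ℝ, 1 ≤ C ∧ ∀ x H : ℕ, 1 ≤ x → 1 ≤ H →
      (H : ℝ) ≤ (x : ℝ) ^ ((1 : ℝ) - 1 / (100 * (k : ℝ))) →
      (#(solsF j x H) : ℝ) ≤ C * (H : ℝ) ^ j * Real.sqrt ((H : ℝ) / x) := by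
  intro j
  induction j with
  | zero =>
    intro _
    refine ⟨1, le_refl 1, fun x H hx hH hHx => ?_⟩
    rw [solsF_zero]
    simp only [Finset.card_empty, Nat.cast_zero, pow_zero, mul_one, one_mul]
    positivity
  | succ j ih =>
    intro hjk
    obtain ⟨C, hC1, hCb⟩ := ih (by omega)
    have hk0 : (0 : ℝ) < k := by exact_mod_cast hk
    refine ⟨(k : ℝ) ^ 2 * C + 2 ^ (k + 1) * κ, ?_, ?_⟩
    · have hk1 : (1 : ℝ) ≤ (k : ℝ) := by exact_mod_cast hk
      have h1 : (1 : ℝ) ≤ (k : ℝ) ^ 2 := by nlinarith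
      have h2 : (0 : ℝ) ≤ 2 ^ (k + 1) * (κ : ℝ) := by positivity
      nlinarith
    intro x H hx hH hHx
    have hx0 : (0 : ℝ) < x := by exact_mod_cast hx
    have hH0 : (0 : ℝ) < H := by exact_mod_cast hH
    set δ : ℝ := 1 / (100 * (k : ℝ)) with hδdef
    set u : ℝ := 1 / (200 * (k : ℝ)) with hudef
    have hδ0 : 0 < δ := by rw [hδdef]; positivity
    have hu0 : 0 < u := by rw [hudef]; positivity
    have hδu : δ = 2 * u := by rw [hδdef, hudef]; field_simp; ring
    have hδ1 : δ ≤ 1 := by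
      rw [hδdef]
      rw [div_le_one (by positivity)]
      have : (1 : ℝ) ≤ (k : ℝ) := by exact_mod_cast hk
      linarith
    have hu1 : u ≤ 1 := by linarith
    -- H ≤ x (real)
    have hHlex : (H : ℝ) ≤ x := by
      calc (H : ℝ) ≤ (x : ℝ) ^ ((1 : ℝ) - δ) := hHx
      _ ≤ (x : ℝ) ^ (1 : ℝ) := by
          apply Real.rpow_le_rpow_of_exponent_le (by exact_mod_cast hx)
          linarith
      _ = x := Real.rpow_one _
    -- sqrt(H/x) facts
    have hsqrt0 : 0 < Real.sqrt ((H : ℝ) / x) := Real.sqrt_pos.mpr (by positivity)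
    have hsq : Real.sqrt ((H : ℝ) / x) * (x : ℝ) ^ u ≤ 1 := by
      have h1 : (H : ℝ) / x ≤ (x : ℝ) ^ (-δ) := by
        rw [div_le_iff₀ hx0]
        calc (H : ℝ) ≤ (x : ℝ) ^ ((1 : ℝ) - δ) := hHx
        _ = (x : ℝ) ^ (-δ) * x := by
            rw [Real.rpow_sub hx0, Real.rpow_one, Real.rpow_neg (le_of_lt hx0)]
            ring
      have h2 : Real.sqrt ((H : ℝ) / x) ≤ (x : ℝ) ^ (-u) := by
        calc Real.sqrt ((H : ℝ) / x) ≤ Real.sqrt ((x : ℝ) ^ (-δ)) := Real.sqrt_le_sqrt h1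
        _ = ((x : ℝ) ^ (-δ)) ^ ((1 : ℝ) / (2 : ℝ)) := Real.sqrt_eq_rpow _
        _ = (x : ℝ) ^ (-u) := by
            rw [← Real.rpow_mul (le_of_lt hx0)]
            congr 1
            rw [hδu]; ring
      calc Real.sqrt ((H : ℝ) / x) * (x : ℝ) ^ u ≤ (x : ℝ) ^ (-u) * (x : ℝ) ^ u := by
            apply mul_le_mul_of_nonneg_right h2 (by positivity)
      _ = 1 := by
          rw [← Real.rpow_add hx0]
          simp
    -- collision part
    have hcoll : (#({p ∈ solsF (j + 1) x H | ∃ i i', p.1 i = p.2 i'}) : ℝ) ≤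
        (k : ℝ) ^ 2 * C * (H : ℝ) ^ (j + 1) * Real.sqrt ((H : ℝ) / x) := by
      have h1 := coll_card j x H
      have h2 : (#({p ∈ solsF (j + 1) x H | ∃ i i', p.1 i = p.2 i'}) : ℝ) ≤
          ((j : ℝ) + 1) * ((j : ℝ) + 1) * H * (#(solsF j x H) : ℝ) := by
        exact_mod_cast h1
      have h3 : (#(solsF j x H) : ℝ) ≤ C * (H : ℝ) ^ j * Real.sqrt ((H : ℝ) / x) :=
        hCb x H hx hH hHx
      have hjk' : ((j : ℝ) + 1) ≤ k := by exact_mod_cast hjk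
      calc (#({p ∈ solsF (j + 1) x H | ∃ i i', p.1 i = p.2 i'}) : ℝ)
          ≤ ((j : ℝ) + 1) * ((j : ℝ) + 1) * H * (C * (H : ℝ) ^ j * Real.sqrt ((H : ℝ) / x)) := by
            refine le_trans h2 ?_
            apply mul_le_mul_of_nonneg_left h3 (by positivity)
      _ = (((j : ℝ) + 1) * ((j : ℝ) + 1)) * (C * (H : ℝ) ^ (j + 1) * Real.sqrt ((H : ℝ) / x)) := by
            ring
      _ ≤ ((k : ℝ) * k) * (C * (H : ℝ) ^ (j + 1) * Real.sqrt ((H : ℝ) / x)) := by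
            apply mul_le_mul_of_nonneg_right ?_ (by positivity)
            nlinarith
      _ = (k : ℝ) ^ 2 * C * (H : ℝ) ^ (j + 1) * Real.sqrt ((H : ℝ) / x) := by ring
    -- disjoint part
    have hdisj : (#({p ∈ solsF (j + 1) x H | ∀ i i', p.1 i ≠ p.2 i'}) : ℝ) ≤
        2 ^ (k + 1) * (κ : ℝ) * (H : ℝ) ^ (j + 1) * Real.sqrt ((H : ℝ) / x) := by
      have h0 := disj_card j x H J κ hκ hJ hx hH hdiv
      obtain ⟨E, hEdef⟩ : ∃ E : ℝ, E = 2 * (κ : ℝ) * x := ⟨_, rfl⟩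
      have hx1 : (1 : ℝ) ≤ (x : ℝ) := by exact_mod_cast hx
      have hκ1 : (1 : ℝ) ≤ (κ : ℝ) := by exact_mod_cast hκ
      have hκx : (1 : ℝ) ≤ (κ : ℝ) * x := by
        have h := mul_le_mul hκ1 hx1 zero_le_one (le_trans zero_le_one hκ1)
        simpa using h
      have hE1 : (1 : ℝ) ≤ E := by rw [hEdef]; linarith
      have hE0 : (0 : ℝ) < E := by linarith
      -- base bounds
      have hb1 : (κ : ℝ) * ((x : ℝ) + H) ≤ E := by
        rw [hEdef]
        have hxh : (x : ℝ) + H ≤ 2 * x := by linarith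
        calc (κ : ℝ) * ((x : ℝ) + H) ≤ (κ : ℝ) * (2 * x) :=
              mul_le_mul_of_nonneg_left hxh (by positivity)
        _ = 2 * (κ : ℝ) * x := by ring
      have hb2 : (κ : ℝ) * ((x : ℝ) + H) ^ (j + 1) ≤ E ^ (j + 1) := by
        have h1 : ((x : ℝ) + H) ^ (j + 1) ≤ (2 * (x : ℝ)) ^ (j + 1) := by
          apply pow_le_pow_left₀ (by positivity)
          linarith
        have h2 : (κ : ℝ) ≤ (κ : ℝ) ^ (j + 1) := le_self_pow₀ hκ1 (by omega)
        calc (κ : ℝ) * ((x : ℝ) + H) ^ (j + 1) ≤ (κ : ℝ) ^ (j + 1) * (2 * (x : ℝ)) ^ (j + 1) := by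
              apply mul_le_mul h2 h1 (by positivity) (by positivity)
        _ = E ^ (j + 1) := by rw [hEdef]; ring
      -- rpow factor bounds
      have hF1 : ((κ : ℝ) * ((x : ℝ) + H)) ^ (((j : ℝ) + 1) / J) ≤ E ^ (((j : ℝ) + 1) / J) :=
        Real.rpow_le_rpow (by positivity) hb1 (by positivity)
      have hF2 : ((κ : ℝ) * ((x : ℝ) + H) ^ (j + 1)) ^ ((j : ℝ) / J) ≤
          E ^ (((j : ℝ) + 1) * ((j : ℝ) / J)) := by
        calc ((κ : ℝ) * ((x : ℝ) + H) ^ (j + 1)) ^ ((j : ℝ) / J)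
            ≤ (E ^ (j + 1)) ^ ((j : ℝ) / J) :=
              Real.rpow_le_rpow (by positivity) hb2 (by positivity)
        _ = (E ^ (((j : ℕ) : ℝ) + 1)) ^ ((j : ℝ) / J) := by
              rw [← Real.rpow_natCast E (j + 1)]
              push_cast
              ring_nf
        _ = E ^ (((j : ℝ) + 1) * ((j : ℝ) / J)) := by
              rw [← Real.rpow_mul (le_of_lt hE0)]
      have hFF : ((κ : ℝ) * ((x : ℝ) + H)) ^ (((j : ℝ) + 1) / J) *
          ((κ : ℝ) * ((x : ℝ) + H) ^ (j + 1)) ^ ((j : ℝ) / J) ≤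
          2 * (κ : ℝ) * (x : ℝ) ^ u := by
        have hexp : ((j : ℝ) + 1) / J + ((j : ℝ) + 1) * ((j : ℝ) / J) ≤ u := by
          have hJ0 : (0 : ℝ) < J := by exact_mod_cast hJ
          have hjk' : ((j : ℝ) + 1) ≤ k := by exact_mod_cast hjk
          have hj0 : (0 : ℝ) ≤ (j : ℝ) := Nat.cast_nonneg j
          have hJb : 200 * (k : ℝ) ^ 3 ≤ J := by exact_mod_cast hJbig
          rw [hudef]
          have hrw : ((j : ℝ) + 1) / J + ((j : ℝ) + 1) * ((j : ℝ) / J) =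
              (((j : ℝ) + 1) + ((j : ℝ) + 1) * (j : ℝ)) / J := by ring
          rw [hrw, div_le_div_iff₀ hJ0 (by positivity)]
          calc (((j : ℝ) + 1) + ((j : ℝ) + 1) * (j : ℝ)) * (200 * (k : ℝ)) =
              ((j : ℝ) + 1) ^ 2 * (200 * (k : ℝ)) := by ring
          _ ≤ (k : ℝ) ^ 2 * (200 * (k : ℝ)) := by
              apply mul_le_mul_of_nonneg_right ?_ (by positivity)
              nlinarith
          _ = 200 * (k : ℝ) ^ 3 := by ring
          _ ≤ J := hJb
          _ = 1 * J := by ring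
        calc ((κ : ℝ) * ((x : ℝ) + H)) ^ (((j : ℝ) + 1) / J) *
            ((κ : ℝ) * ((x : ℝ) + H) ^ (j + 1)) ^ ((j : ℝ) / J)
            ≤ E ^ (((j : ℝ) + 1) / J) * E ^ (((j : ℝ) + 1) * ((j : ℝ) / J)) := by
              apply mul_le_mul hF1 hF2 (by positivity) (by positivity)
        _ = E ^ (((j : ℝ) + 1) / J + ((j : ℝ) + 1) * ((j : ℝ) / J)) :=
              (Real.rpow_add hE0 _ _).symm
        _ ≤ E ^ u := Real.rpow_le_rpow_of_exponent_le hE1 hexp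
        _ = (2 * (κ : ℝ)) ^ u * (x : ℝ) ^ u := by
              rw [hEdef, Real.mul_rpow (by positivity) (by positivity)]
        _ ≤ 2 * (κ : ℝ) * (x : ℝ) ^ u := by
              apply mul_le_mul_of_nonneg_right ?_ (by positivity)
              calc (2 * (κ : ℝ)) ^ u ≤ (2 * (κ : ℝ)) ^ (1 : ℝ) := by
                    apply Real.rpow_le_rpow_of_exponent_le (by nlinarith) hu1
              _ = 2 * (κ : ℝ) := Real.rpow_one _
      -- final assembly for disjoint part
      have hkey : (H : ℝ) / x * (x : ℝ) ^ u ≤ Real.sqrt ((H : ℝ) / x) := by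
        have h2 : Real.sqrt ((H : ℝ) / x) * (Real.sqrt ((H : ℝ) / x) * (x : ℝ) ^ u) =
            (H : ℝ) / x * (x : ℝ) ^ u := by
          rw [← mul_assoc, Real.mul_self_sqrt (by positivity)]
        calc (H : ℝ) / x * (x : ℝ) ^ u
            = Real.sqrt ((H : ℝ) / x) * (Real.sqrt ((H : ℝ) / x) * (x : ℝ) ^ u) := h2.symm
        _ ≤ Real.sqrt ((H : ℝ) / x) * 1 := by
              apply mul_le_mul_of_nonneg_left hsq (le_of_lt hsqrt0)
        _ = Real.sqrt ((H : ℝ) / x) := mul_one _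
      refine le_trans h0 ?_
      calc (H : ℝ) * ((κ : ℝ) * ((x : ℝ) + H)) ^ (((j : ℝ) + 1) / J) *
            ((2 * (H : ℝ)) ^ (j + 1) / x) * ((κ : ℝ) * ((x : ℝ) + H) ^ (j + 1)) ^ ((j : ℝ) / J)
          = (((κ : ℝ) * ((x : ℝ) + H)) ^ (((j : ℝ) + 1) / J) *
              ((κ : ℝ) * ((x : ℝ) + H) ^ (j + 1)) ^ ((j : ℝ) / J)) *
              (2 ^ (j + 1) * ((H : ℝ) ^ (j + 1) * ((H : ℝ) / x))) := by
            rw [mul_pow]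
            ring
      _ ≤ (2 * (κ : ℝ) * (x : ℝ) ^ u) * (2 ^ (j + 1) * ((H : ℝ) ^ (j + 1) * ((H : ℝ) / x))) := by
            apply mul_le_mul_of_nonneg_right hFF (by positivity)
      _ = 2 ^ (j + 2) * (κ : ℝ) * (H : ℝ) ^ (j + 1) * ((H : ℝ) / x * (x : ℝ) ^ u) := by
            ring
      _ ≤ 2 ^ (j + 2) * (κ : ℝ) * (H : ℝ) ^ (j + 1) * Real.sqrt ((H : ℝ) / x) := by
            apply mul_le_mul_of_nonneg_left hkey (by positivity)
      _ ≤ 2 ^ (k + 1) * (κ : ℝ) * (H : ℝ) ^ (j + 1) * Real.sqrt ((H : ℝ) / x) := by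
            apply mul_le_mul_of_nonneg_right ?_ (le_of_lt hsqrt0)
            apply mul_le_mul_of_nonneg_right ?_ (by positivity)
            apply mul_le_mul_of_nonneg_right ?_ (by positivity)
            apply pow_le_pow_right₀ (by norm_num)
            omega
    -- combine
    have hsplit := sols_split j x H
    calc (#(solsF (j + 1) x H) : ℝ)
        ≤ (#({p ∈ solsF (j + 1) x H | ∃ i i', p.1 i = p.2 i'}) : ℝ) +
          (#({p ∈ solsF (j + 1) x H | ∀ i i', p.1 i ≠ p.2 i'}) : ℝ) := by
          have h := (Nat.cast_le (α := ℝ)).mpr hsplit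
          push_cast at h
          exact h
    _ ≤ (k : ℝ) ^ 2 * C * (H : ℝ) ^ (j + 1) * Real.sqrt ((H : ℝ) / x) +
          2 ^ (k + 1) * (κ : ℝ) * (H : ℝ) ^ (j + 1) * Real.sqrt ((H : ℝ) / x) :=
        add_le_add hcoll hdisj
    _ = ((k : ℝ) ^ 2 * C + 2 ^ (k + 1) * κ) * (H : ℝ) ^ (j + 1) * Real.sqrt ((H : ℝ) / x) := by
        ring

/-- for every `k ≥ 1` there are `C_k > 0` and a threshold `x₀(k)` such
that for all integers `x ≥ x₀(k)` and `H ≥ 1` with `H ≤ x^{1 − 1/(100k)}`, one has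
`N_k(x, H) ≤ C_k · H^k · (H/x)^{1/2}`. -/
theorem stmt8 (k : ℕ) (hk : 1 ≤ k) :
    ∃ C : ℝ, 0 < C ∧ ∃ x₀ : ℕ, ∀ x H : ℕ, x₀ ≤ x → 1 ≤ H →
      (H : ℝ) ≤ (x : ℝ) ^ ((1 : ℝ) - 1 / (100 * (k : ℝ))) →
      (NkCount k x H : ℝ) ≤ C * (H : ℝ) ^ k * Real.sqrt ((H : ℝ) / (x : ℝ)) := by
  have hJ1 : 1 ≤ 200 * k ^ 3 := by
    have := Nat.one_le_pow 3 k hk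
    omega
  obtain ⟨κ, hκ, hdiv⟩ := divisor_bound (200 * k ^ 3) hJ1
  obtain ⟨C, hC1, hC⟩ := main_ind k (200 * k ^ 3) κ hk hJ1 hκ hdiv (le_refl _)
    k (le_refl k)
  refine ⟨C, by linarith, 1, fun x H hx hH hHx => ?_⟩
  rw [NkCount_eq]
  exact hC x H hx hH hHx
end

section
/- For every integer k ≥ 1 there exists a constant C_k > 0 such that for all integers y, X, H ≥ 1, the set B_k(X, H; y) of integer tuples (x, t₁, …, t_k, h₁, …, h_k) with 1 ≤ x ≤ X, 1 ≤ t_i ≤ H, h_i ∈ [−H, H] ∩ ℤ, y | (x+t₁)(x+t₂)⋯(x+t_k)·h₁h₂⋯h_k, and h₁h₂⋯h_k ≠ 0, has size at most C_k · H^{2k} · τ₂(y)·τ_k(y)² · (1 + X / rad_k(y)). -/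
/-- `rad_k(n)`: the minimum of `lcm(n₁,…,n_k)` over factorizations `n = n₁⋯n_k`
into positive integers. -/
noncomputable def radk (k n : ℕ) : ℕ :=
  sInf {m : ℕ | ∃ d : Fin k → ℕ, (∀ i, 0 < d i) ∧ ∏ i, d i = n ∧ Finset.univ.lcm d = m}

/-- `B_k(X, H; y)`: the number of tuples `(x, t₁,…,t_k, h₁,…,h_k)` with `1 ≤ x ≤ X`,
`1 ≤ t_i ≤ H`, `h_i ∈ [−H, H] ∩ ℤ`, `y ∣ (x+t₁)⋯(x+t_k)·h₁⋯h_k` and `h₁⋯h_k ≠ 0`. -/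
noncomputable def BkCount (k X H y : ℕ) : ℕ :=
  Nat.card {t : ℕ × (Fin k → ℕ) × (Fin k → ℤ) //
    t.1 ∈ Finset.Icc 1 X ∧ (∀ i, t.2.1 i ∈ Finset.Icc 1 H) ∧
    (∀ i, t.2.2 i ∈ Finset.Icc (-(H : ℤ)) (H : ℤ)) ∧
    (y : ℤ) ∣ (∏ i, ((t.1 : ℤ) + (t.2.1 i : ℤ))) * ∏ i, t.2.2 i ∧
    (∏ i, t.2.2 i) ≠ 0}

def factF (k y : ℕ) : Finset (Fin k → ℕ) :=
  (Fintype.piFinset fun _ : Fin k => Finset.Icc 1 y).filter fun d => (∀ i, 0 < d i) ∧ ∏ i, d i = y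

lemma mem_factF {k y : ℕ} (hy : 1 ≤ y) {d : Fin k → ℕ} :
    d ∈ factF k y ↔ (∀ i, 0 < d i) ∧ ∏ i, d i = y := by
  constructor
  · exact fun h => (Finset.mem_filter.1 h).2
  · intro h
    refine Finset.mem_filter.2 ⟨Fintype.mem_piFinset.2 fun i => ?_, h⟩
    exact Finset.mem_Icc.2 ⟨h.1 i,
      Nat.le_of_dvd hy (h.2 ▸ Finset.dvd_prod_of_mem d (Finset.mem_univ i))⟩

lemma tauNat_eq_card (k y : ℕ) (hy : 1 ≤ y) : tauNat k y = (factF k y).card := by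
  rw [tauNat, ← Nat.card_eq_finsetCard]
  exact Nat.card_congr (Equiv.subtypeEquivRight fun d => (mem_factF hy).symm)

lemma radk_mem {k y : ℕ} (hk : 1 ≤ k) (hy : 1 ≤ y) :
    ∃ d : Fin k → ℕ, (∀ i, 0 < d i) ∧ ∏ i, d i = y ∧ Finset.univ.lcm d = radk k y := by
  have hne : {m : ℕ | ∃ d : Fin k → ℕ, (∀ i, 0 < d i) ∧ ∏ i, d i = y ∧
      Finset.univ.lcm d = m}.Nonempty := by
    refine ⟨_, Function.update (fun _ => 1) ⟨0, hk⟩ y, fun i => ?_, ?_, rfl⟩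
    · rcases eq_or_ne i ⟨0, hk⟩ with rfl | h
      · simpa using (show 0 < y by omega)
      · simp [Function.update_of_ne h, hy]
    · rw [Finset.prod_update_of_mem (Finset.mem_univ _)]
      simp
  exact Nat.sInf_mem hne

lemma radk_le {k y : ℕ} (d : Fin k → ℕ) (hpos : ∀ i, 0 < d i) (hprod : ∏ i, d i = y) :
    radk k y ≤ Finset.univ.lcm d :=
  Nat.sInf_le ⟨d, hpos, hprod, rfl⟩

lemma radk_pos {k y : ℕ} (hk : 1 ≤ k) (hy : 1 ≤ y) : 0 < radk k y := by
  obtain ⟨d, hpos, hprod, hlcm⟩ := radk_mem hk hy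
  have hdvd : Finset.univ.lcm d ∣ y :=
    Finset.lcm_dvd fun i _ => hprod ▸ Finset.dvd_prod_of_mem d (Finset.mem_univ i)
  have := Nat.pos_of_dvd_of_pos hdvd hy
  omega

lemma exists_split : ∀ {k : ℕ} (f : Fin k → ℕ) (n : ℕ), n ∣ ∏ i, f i →
    ∃ g : Fin k → ℕ, (∀ i, g i ∣ f i) ∧ ∏ i, g i = n := by
  intro k
  induction k with
  | zero =>
    intro f n hn
    simp only [Finset.univ_eq_empty, Finset.prod_empty, Nat.dvd_one] at hn
    exact ⟨fun _ => 1, fun i => i.elim0, by simp [hn]⟩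
  | succ m ih =>
    intro f n hn
    rw [Fin.prod_univ_succ] at hn
    obtain ⟨d₁, d₂, h1, h2, rfl⟩ := exists_dvd_and_dvd_of_dvd_mul hn
    obtain ⟨g, hg, hgp⟩ := ih (fun i => f i.succ) d₂ h2
    refine ⟨Fin.cons d₁ g, fun i => ?_, ?_⟩
    · refine Fin.cases ?_ (fun j => ?_) i
      · simpa using h1
      · simpa using hg j
    · rw [Fin.prod_univ_succ]
      simp [hgp]

noncomputable def Bfin (k y X H : ℕ) : Finset (ℕ × (Fin k → ℕ) × (Fin k → ℤ)) :=
  ((Finset.Icc 1 X) ×ˢ (Fintype.piFinset fun _ : Fin k => Finset.Icc 1 H) ×ˢ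
    (Fintype.piFinset fun _ : Fin k => Finset.Icc (-(H : ℤ)) (H : ℤ))).filter
    fun t => (y : ℤ) ∣ (∏ i, ((t.1 : ℤ) + (t.2.1 i : ℤ))) * ∏ i, t.2.2 i ∧
      (∏ i, t.2.2 i) ≠ 0

lemma mem_Bfin {k y X H : ℕ} {t : ℕ × (Fin k → ℕ) × (Fin k → ℤ)} :
    t ∈ Bfin k y X H ↔
      (t.1 ∈ Finset.Icc 1 X ∧ (∀ i, t.2.1 i ∈ Finset.Icc 1 H) ∧
      (∀ i, t.2.2 i ∈ Finset.Icc (-(H : ℤ)) (H : ℤ)) ∧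
      (y : ℤ) ∣ (∏ i, ((t.1 : ℤ) + (t.2.1 i : ℤ))) * ∏ i, t.2.2 i ∧
      (∏ i, t.2.2 i) ≠ 0) := by
  simp only [Bfin, Finset.mem_filter, Finset.mem_product, Fintype.mem_piFinset, and_assoc]

lemma BkCount_eq (k y X H : ℕ) : BkCount k X H y = (Bfin k y X H).card := by
  rw [BkCount, ← Nat.card_eq_finsetCard]
  exact Nat.card_congr (Equiv.subtypeEquivRight fun s => mem_Bfin.symm)

def Pred (k y : ℕ) (s : ℕ × (Fin k → ℕ) × (Fin k → ℤ))
    (p : (Fin k → ℕ) × (Fin k → ℕ)) : Prop :=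
  (∀ i, p.1 i ∣ s.1 + s.2.1 i) ∧ (∀ i, p.2 i ∣ (s.2.2 i).natAbs) ∧
    (∏ i, p.1 i) * ∏ i, p.2 i = y

lemma exists_pred {k y X H : ℕ} {s : ℕ × (Fin k → ℕ) × (Fin k → ℤ)}
    (hs : s ∈ Bfin k y X H) : ∃ p, Pred k y s p := by
  obtain ⟨hx, ht, hh, hdvd, hne⟩ := mem_Bfin.1 hs
  have h0 : y ∣ (∏ i, (s.1 + s.2.1 i)) * ∏ i, (s.2.2 i).natAbs := by
    have h1 := Int.natAbs_dvd_natAbs.mpr hdvd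
    rw [Int.natAbs_natCast, Int.natAbs_mul] at h1
    have hP : (∏ i, ((s.1 : ℤ) + (s.2.1 i : ℤ))).natAbs = ∏ i, (s.1 + s.2.1 i) := by
      have : (∏ i, ((s.1 : ℤ) + (s.2.1 i : ℤ))) = ((∏ i, (s.1 + s.2.1 i) : ℕ) : ℤ) := by
        push_cast; rfl
      rw [this, Int.natAbs_natCast]
    have hQ : (∏ i, s.2.2 i).natAbs = ∏ i, (s.2.2 i).natAbs :=
      map_prod Int.natAbsHom _ _
    rwa [hP, hQ] at h1
  obtain ⟨A, B, hA, hB, hAB⟩ := exists_dvd_and_dvd_of_dvd_mul h0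
  obtain ⟨a, ha, hap⟩ := exists_split _ A hA
  obtain ⟨b, hb, hbp⟩ := exists_split _ B hB
  exact ⟨(a, b), ha, hb, by rw [hap, hbp, hAB]⟩

open Classical in
noncomputable def keyf (k y : ℕ) (s : ℕ × (Fin k → ℕ) × (Fin k → ℤ)) :
    ((Fin k → ℕ) × (Fin k → ℕ)) × (Fin k → ℕ) :=
  (if h : ∃ p, Pred k y s p then h.choose else (fun _ => 1, fun _ => 1), s.2.1)

lemma keyf_spec {k y X H : ℕ} {s : ℕ × (Fin k → ℕ) × (Fin k → ℤ)}
    (hs : s ∈ Bfin k y X H) : Pred k y s (keyf k y s).1 := by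
  have h : ∃ p, Pred k y s p := exists_pred hs
  simp only [keyf, dif_pos h]
  exact h.choose_spec

def Fset (k y : ℕ) : Finset ((Fin k → ℕ) × (Fin k → ℕ)) :=
  ((Fintype.piFinset fun _ : Fin k => Finset.Icc 1 y) ×ˢ
    (Fintype.piFinset fun _ : Fin k => Finset.Icc 1 y)).filter
    fun p => (∏ i, p.1 i) * ∏ i, p.2 i = y

lemma mem_Fset {k y : ℕ} (hy : 1 ≤ y) {p : (Fin k → ℕ) × (Fin k → ℕ)} :
    p ∈ Fset k y ↔ (∏ i, p.1 i) * ∏ i, p.2 i = y := by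
  constructor
  · exact fun h => (Finset.mem_filter.1 h).2
  · intro h
    have hA : (∏ i, p.1 i) ∣ y := ⟨∏ i, p.2 i, h.symm⟩
    have hB : (∏ i, p.2 i) ∣ y := ⟨∏ i, p.1 i, by rw [← h, mul_comm]⟩
    have h1 : ∀ i, p.1 i ∣ y := fun i =>
      dvd_trans (Finset.dvd_prod_of_mem p.1 (Finset.mem_univ i)) hA
    have h2 : ∀ i, p.2 i ∣ y := fun i =>
      dvd_trans (Finset.dvd_prod_of_mem p.2 (Finset.mem_univ i)) hB
    have hne : (∏ i, p.1 i) * ∏ i, p.2 i ≠ 0 := by omega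
    refine Finset.mem_filter.2 ⟨Finset.mem_product.2 ⟨Fintype.mem_piFinset.2 fun i => ?_,
      Fintype.mem_piFinset.2 fun i => ?_⟩, h⟩
    · refine Finset.mem_Icc.2 ⟨Nat.pos_of_ne_zero fun h0 => ?_, Nat.le_of_dvd hy (h1 i)⟩
      exact hne (by rw [Finset.prod_eq_zero (Finset.mem_univ i) h0, zero_mul])
    · refine Finset.mem_Icc.2 ⟨Nat.pos_of_ne_zero fun h0 => ?_, Nat.le_of_dvd hy (h2 i)⟩
      exact hne (by rw [Finset.prod_eq_zero (Finset.mem_univ i) h0, mul_zero])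

lemma Fset_pos {k y : ℕ} (hy : 1 ≤ y) {p : (Fin k → ℕ) × (Fin k → ℕ)}
    (hp : p ∈ Fset k y) : (∀ i, 0 < p.1 i) ∧ (∀ i, 0 < p.2 i) := by
  obtain ⟨hmem, -⟩ := Finset.mem_filter.1 hp
  obtain ⟨h1, h2⟩ := Finset.mem_product.1 hmem
  exact ⟨fun i => (Finset.mem_Icc.1 (Fintype.mem_piFinset.1 h1 i)).1,
    fun i => (Finset.mem_Icc.1 (Fintype.mem_piFinset.1 h2 i)).1⟩

lemma keyf_mem {k y X H : ℕ} (hy : 1 ≤ y) {s : ℕ × (Fin k → ℕ) × (Fin k → ℤ)}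
    (hs : s ∈ Bfin k y X H) :
    keyf k y s ∈ (Fset k y) ×ˢ (Fintype.piFinset fun _ : Fin k => Finset.Icc 1 H) := by
  obtain ⟨hx, ht, hh, -, -⟩ := mem_Bfin.1 hs
  refine Finset.mem_product.2 ⟨(mem_Fset hy).2 (keyf_spec hs).2.2, ?_⟩
  exact Fintype.mem_piFinset.2 fun i => ht i

lemma Xset_card_le {k X : ℕ} (a : Fin k → ℕ) (t : Fin k → ℕ)
    (hL : 0 < Finset.univ.lcm a) :
    ((Finset.Icc 1 X).filter fun x => ∀ i, a i ∣ x + t i).card ≤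
      X / Finset.univ.lcm a + 1 := by
  set L := Finset.univ.lcm a with hLdef
  set S := (Finset.Icc 1 X).filter fun x => ∀ i, a i ∣ x + t i with hS
  rcases S.eq_empty_or_nonempty with h | h
  · simp [h]
  · have hmin := S.min'_mem h
    set x₀ := S.min' h with hx0
    have hkey : ∀ x ∈ S, L ∣ x - x₀ := by
      intro x hx
      refine Finset.lcm_dvd fun i _ => ?_
      have h1 : a i ∣ x + t i := (Finset.mem_filter.1 hx).2 i
      have h2 : a i ∣ x₀ + t i := (Finset.mem_filter.1 hmin).2 i
      have h3 := Nat.dvd_sub h1 h2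
      have he : x + t i - (x₀ + t i) = x - x₀ := by omega
      rwa [he] at h3
    have hcard : S.card ≤ (Finset.range (X / L + 1)).card := by
      refine Finset.card_le_card_of_injOn (fun x => (x - x₀) / L) (fun x hx => ?_) ?_
      · dsimp only
        have hxX : x ≤ X := (Finset.mem_Icc.1 (Finset.mem_filter.1 hx).1).2
        refine Finset.mem_range.2 ?_
        have : (x - x₀) / L ≤ X / L := Nat.div_le_div_right (by omega)
        omega
      · intro x hx x' hx' he
        dsimp only at he
        have d1 := hkey x hx
        have d2 := hkey x' hx'
        have e1 : x - x₀ = L * ((x - x₀) / L) := (Nat.mul_div_cancel' d1).symm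
        have e2 : x' - x₀ = L * ((x' - x₀) / L) := (Nat.mul_div_cancel' d2).symm
        have hx1 : x₀ ≤ x := S.min'_le x hx
        have hx2 : x₀ ≤ x' := S.min'_le x' hx'
        rw [he] at e1
        omega
    simpa using hcard

lemma Hcell_card_le {H b : ℕ} (hb : 0 < b) :
    ((Finset.Icc (-(H : ℤ)) (H : ℤ)).filter fun h => ((b : ℤ)) ∣ h ∧ h ≠ 0).card ≤
      2 * (H / b) := by
  set M : ℕ := H / b with hM
  have hcard : ((Finset.Icc (-(M : ℤ)) (M : ℤ)).erase 0).card = 2 * M := by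
    rw [Finset.card_erase_of_mem (by simp), Int.card_Icc]
    omega
  rw [← hcard]
  refine Finset.card_le_card_of_injOn (fun h => h / (b : ℤ)) (fun h hh => ?_) ?_
  · dsimp only
    obtain ⟨hmem, hdvd, hne⟩ := Finset.mem_filter.1 hh
    obtain ⟨h1, h2⟩ := Finset.mem_Icc.1 hmem
    have hq : (b : ℤ) * (h / (b : ℤ)) = h := Int.mul_ediv_cancel' hdvd
    have habs : (h / (b : ℤ)).natAbs ≤ M := by
      have e1 : (h / (b : ℤ)).natAbs = h.natAbs / b := by
        rw [Int.natAbs_ediv_of_dvd hdvd, Int.natAbs_natCast]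
      rw [e1, hM]
      refine Nat.div_le_div_right ?_
      omega
    refine Finset.mem_erase.2 ⟨?_, Finset.mem_Icc.2 ⟨?_, ?_⟩⟩
    · intro h0
      rw [h0, mul_zero] at hq
      exact hne hq.symm
    · omega
    · omega
  · intro h1 hh1 h2 hh2 he
    dsimp only at he
    have d1 : (b : ℤ) ∣ h1 := (Finset.mem_filter.1 hh1).2.1
    have d2 : (b : ℤ) ∣ h2 := (Finset.mem_filter.1 hh2).2.1
    have e1 := Int.mul_ediv_cancel' d1
    have e2 := Int.mul_ediv_cancel' d2
    rw [← e1, ← e2, he]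

lemma fiber_card_le {k y X H : ℕ} (hy : 1 ≤ y) {p : (Fin k → ℕ) × (Fin k → ℕ)}
    (hp : p ∈ Fset k y) (t : Fin k → ℕ) :
    ((Bfin k y X H).filter fun s => keyf k y s = (p, t)).card ≤
      (X / Finset.univ.lcm p.1 + 1) * ∏ i, (2 * (H / p.2 i)) := by
  obtain ⟨ha, hb⟩ := Fset_pos hy hp
  have hprod := (mem_Fset hy).1 hp
  have hL : 0 < Finset.univ.lcm p.1 := by
    have hdvd : Finset.univ.lcm p.1 ∣ y := by
      refine Finset.lcm_dvd fun i _ => ?_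
      exact dvd_trans (Finset.dvd_prod_of_mem p.1 (Finset.mem_univ i)) ⟨∏ i, p.2 i, hprod.symm⟩
    exact Nat.pos_of_dvd_of_pos hdvd hy
  set Xset := (Finset.Icc 1 X).filter fun x => ∀ i, p.1 i ∣ x + t i with hXs
  set Hset := Fintype.piFinset fun i : Fin k =>
    (Finset.Icc (-(H : ℤ)) (H : ℤ)).filter fun h => ((p.2 i : ℤ)) ∣ h ∧ h ≠ 0 with hHs
  have step1 : ((Bfin k y X H).filter fun s => keyf k y s = (p, t)).card ≤
      (Xset ×ˢ Hset).card := by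
    refine Finset.card_le_card_of_injOn (fun s => (s.1, s.2.2)) (fun s hs => ?_) ?_
    · obtain ⟨hsB, hkey⟩ := Finset.mem_filter.1 hs
      have hspec := keyf_spec (y := y) hsB
      have ht : s.2.1 = t := congrArg Prod.snd hkey
      have hpp : (keyf k y s).1 = p := congrArg Prod.fst hkey
      rw [hpp] at hspec
      obtain ⟨hx, htm, hh, hdvd, hne⟩ := mem_Bfin.1 hsB
      refine Finset.mem_product.2 ⟨Finset.mem_filter.2 ⟨hx, fun i => ?_⟩,
        Fintype.mem_piFinset.2 fun i => Finset.mem_filter.2 ⟨hh i, ?_, ?_⟩⟩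
      · have := hspec.1 i
        rwa [ht] at this
      · exact Int.natCast_dvd.2 (hspec.2.1 i)
      · exact fun h0 => hne (Finset.prod_eq_zero (Finset.mem_univ i) h0)
    · intro s hs s' hs' he
      dsimp only at he
      have ht : s.2.1 = t := congrArg Prod.snd (Finset.mem_filter.1 hs).2
      have ht' : s'.2.1 = t := congrArg Prod.snd (Finset.mem_filter.1 hs').2
      obtain ⟨h1, h2⟩ := Prod.ext_iff.1 he
      dsimp only at h1 h2
      refine Prod.ext_iff.2 ⟨h1, Prod.ext_iff.2 ⟨?_, h2⟩⟩
      rw [ht, ht']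
  refine le_trans step1 ?_
  rw [Finset.card_product]
  refine Nat.mul_le_mul (Xset_card_le p.1 t hL) ?_
  rw [hHs, Fintype.card_piFinset]
  exact Finset.prod_le_prod' fun i _ => Hcell_card_le (hb i)

lemma Fset_card_le {k y : ℕ} (hk : 1 ≤ k) (hy : 1 ≤ y) :
    (Fset k y).card ≤ tauNat 2 y * (tauNat k y * tauNat k y) := by
  rw [tauNat_eq_card 2 y hy, tauNat_eq_card k y hy]
  have hmain : (Fset k y).card ≤ ((factF 2 y) ×ˢ ((factF k y) ×ˢ (factF k y))).card := by
    set i0 : Fin k := ⟨0, hk⟩ with hi0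
    refine Finset.card_le_card_of_injOn
      (fun p => (![∏ i, p.1 i, ∏ i, p.2 i],
        Function.update p.1 i0 (p.1 i0 * ∏ i, p.2 i),
        Function.update p.2 i0 (p.2 i0 * ∏ i, p.1 i)))
      (fun p hp => ?_) ?_
    · obtain ⟨ha, hb⟩ := Fset_pos hy hp
      have hprod := (mem_Fset hy).1 hp
      have hApos : 0 < ∏ i, p.1 i := Finset.prod_pos fun i _ => ha i
      have hBpos : 0 < ∏ i, p.2 i := Finset.prod_pos fun i _ => hb i
      refine Finset.mem_product.2 ⟨(mem_factF hy).2 ⟨?_, ?_⟩,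
        Finset.mem_product.2 ⟨(mem_factF hy).2 ⟨?_, ?_⟩, (mem_factF hy).2 ⟨?_, ?_⟩⟩⟩
      · intro i
        fin_cases i <;> simpa using (by assumption)
      · rw [Fin.prod_univ_two]
        simpa using hprod
      · intro i
        dsimp only
        rcases eq_or_ne i i0 with h | hne
        · rw [h, Function.update_self]
          exact Nat.mul_pos (ha i0) hBpos
        · rw [Function.update_of_ne hne]
          exact ha i
      · dsimp only
        rw [Finset.prod_update_of_mem (Finset.mem_univ i0), ← Finset.erase_eq]
        have := Finset.mul_prod_erase Finset.univ p.1 (Finset.mem_univ i0)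
        calc p.1 i0 * (∏ i, p.2 i) * ∏ x ∈ Finset.univ.erase i0, p.1 x
            = (∏ i, p.2 i) * (p.1 i0 * ∏ x ∈ Finset.univ.erase i0, p.1 x) := by ring
          _ = (∏ i, p.2 i) * ∏ i, p.1 i := by rw [this]
          _ = y := by rw [mul_comm]; exact hprod
      · intro i
        dsimp only
        rcases eq_or_ne i i0 with h | hne
        · rw [h, Function.update_self]
          exact Nat.mul_pos (hb i0) hApos
        · rw [Function.update_of_ne hne]
          exact hb i
      · dsimp only
        rw [Finset.prod_update_of_mem (Finset.mem_univ i0), ← Finset.erase_eq]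
        have := Finset.mul_prod_erase Finset.univ p.2 (Finset.mem_univ i0)
        calc p.2 i0 * (∏ i, p.1 i) * ∏ x ∈ Finset.univ.erase i0, p.2 x
            = (∏ i, p.1 i) * (p.2 i0 * ∏ x ∈ Finset.univ.erase i0, p.2 x) := by ring
          _ = (∏ i, p.1 i) * ∏ i, p.2 i := by rw [this]
          _ = y := hprod
    · intro p hp q hq he
      dsimp only at he
      have hApos : 0 < ∏ i, q.1 i :=
        Finset.prod_pos fun i _ => (Fset_pos hy hq).1 i
      have hBpos : 0 < ∏ i, q.2 i :=
        Finset.prod_pos fun i _ => (Fset_pos hy hq).2 i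
      have h1 := congrArg Prod.fst he
      have hA : ∏ i, p.1 i = ∏ i, q.1 i := by
        have := congrFun h1 0
        simpa using this
      have hB : ∏ i, p.2 i = ∏ i, q.2 i := by
        have := congrFun h1 1
        simpa using this
      have h2 := congrArg (fun z => z.2.1) he
      have h3 := congrArg (fun z => z.2.2) he
      dsimp only at h2 h3
      have hp1 : p.1 = q.1 := by
        funext i
        rcases eq_or_ne i i0 with h | hne
        · rw [h]
          have := congrFun h2 i0
          rw [Function.update_self, Function.update_self, hB] at this
          exact Nat.eq_of_mul_eq_mul_right hBpos this
        · have := congrFun h2 i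
          rwa [Function.update_of_ne hne, Function.update_of_ne hne] at this
      have hp2 : p.2 = q.2 := by
        funext i
        rcases eq_or_ne i i0 with h | hne
        · rw [h]
          have := congrFun h3 i0
          rw [Function.update_self, Function.update_self, hA] at this
          exact Nat.eq_of_mul_eq_mul_right hApos this
        · have := congrFun h3 i
          rwa [Function.update_of_ne hne, Function.update_of_ne hne] at this
      exact Prod.ext_iff.2 ⟨hp1, hp2⟩
  calc (Fset k y).card ≤ _ := hmain
    _ = (factF 2 y).card * ((factF k y).card * (factF k y).card) := by
        rw [Finset.card_product, Finset.card_product]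

lemma term_bound {k y X H : ℕ} (hk : 1 ≤ k) (hy : 1 ≤ y) (hX : 1 ≤ X) (hH : 1 ≤ H)
    {p : (Fin k → ℕ) × (Fin k → ℕ)} (hp : p ∈ Fset k y) :
    ((H ^ k * ((X / Finset.univ.lcm p.1 + 1) * ∏ i, (2 * (H / p.2 i))) : ℕ) : ℝ) ≤
      2 ^ k * (H : ℝ) ^ (2 * k) * (1 + (X : ℝ) / (radk k y : ℝ)) := by
  obtain ⟨ha, hb⟩ := Fset_pos hy hp
  have hprod := (mem_Fset hy).1 hp
  set L := Finset.univ.lcm p.1 with hLdef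
  set B := ∏ i, p.2 i with hBdef
  have hBpos : 0 < B := Finset.prod_pos fun i _ => hb i
  have hLpos : 0 < L := by
    have hdvd : L ∣ y := by
      refine Finset.lcm_dvd fun i _ => ?_
      exact dvd_trans (Finset.dvd_prod_of_mem p.1 (Finset.mem_univ i)) ⟨B, hprod.symm⟩
    exact Nat.pos_of_dvd_of_pos hdvd hy
  have hradpos : 0 < radk k y := radk_pos hk hy
  have hrle : radk k y ≤ L * B := by
    have h1 : radk k y ≤ Finset.univ.lcm fun i => p.1 i * p.2 i := by
      refine radk_le _ (fun i => Nat.mul_pos (ha i) (hb i)) ?_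
      rw [Finset.prod_mul_distrib]
      exact hprod
    have h2 : (Finset.univ.lcm fun i => p.1 i * p.2 i) ∣ L * B := by
      refine Finset.lcm_dvd fun i _ => ?_
      exact mul_dvd_mul (Finset.dvd_lcm (Finset.mem_univ i))
        (Finset.dvd_prod_of_mem p.2 (Finset.mem_univ i))
    exact le_trans h1 (Nat.le_of_dvd (Nat.mul_pos hLpos hBpos) h2)
  have hLpos' : (0 : ℝ) < L := by exact_mod_cast hLpos
  have hBpos' : (0 : ℝ) < B := by exact_mod_cast hBpos
  have hradpos' : (0 : ℝ) < radk k y := by exact_mod_cast hradpos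
  have hrle' : (radk k y : ℝ) ≤ (L : ℝ) * B := by exact_mod_cast hrle
  have c3 : ∏ i : Fin k, (2 * ((H : ℝ) / (p.2 i : ℝ))) = 2 ^ k * (H : ℝ) ^ k / B := by
    rw [Finset.prod_mul_distrib, Finset.prod_const, Finset.prod_div_distrib,
      Finset.prod_const, Finset.card_univ, Fintype.card_fin]
    rw [hBdef]
    push_cast
    ring
  calc ((H ^ k * ((X / L + 1) * ∏ i, (2 * (H / p.2 i))) : ℕ) : ℝ)
      = (H : ℝ) ^ k * ((((X / L : ℕ) : ℝ)) + 1) * ∏ i, ((2 * (H / p.2 i) : ℕ) : ℝ) := by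
        push_cast
        ring
    _ ≤ (H : ℝ) ^ k * ((X : ℝ) / (L : ℝ) + 1) * ∏ i, (2 * ((H : ℝ) / (p.2 i : ℝ))) := by
        have hc1 : ((X / L : ℕ) : ℝ) ≤ (X : ℝ) / (L : ℝ) := Nat.cast_div_le
        refine mul_le_mul (by gcongr) ?_ (by positivity) (by positivity)
        refine Finset.prod_le_prod (fun i _ => by positivity) fun i _ => ?_
        have : ((H / p.2 i : ℕ) : ℝ) ≤ (H : ℝ) / (p.2 i : ℝ) := Nat.cast_div_le
        push_cast
        linarith
    _ = 2 ^ k * (H : ℝ) ^ (2 * k) * (((X : ℝ) / L + 1) / B) := by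
        rw [c3, two_mul, pow_add]
        field_simp
    _ ≤ 2 ^ k * (H : ℝ) ^ (2 * k) * (1 + (X : ℝ) / (radk k y : ℝ)) := by
        refine mul_le_mul_of_nonneg_left ?_ (by positivity)
        have e : ((X : ℝ) / L + 1) / B = (X : ℝ) / ((L : ℝ) * B) + 1 / B := by
          rw [add_div, div_div]
        rw [e]
        have h1 : (X : ℝ) / ((L : ℝ) * B) ≤ (X : ℝ) / (radk k y : ℝ) := by gcongr <;> positivity
        have h2 : 1 / (B : ℝ) ≤ 1 := by
          rw [div_le_one hBpos']
          exact_mod_cast hBpos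
        linarith


/-- for every `k ≥ 1` there is `C_k > 0` such that for all integers
`y, X, H ≥ 1`, `#B_k(X, H; y) ≤ C_k · H^{2k} · τ₂(y)·τ_k(y)² · (1 + X / rad_k(y))`. -/
theorem stmt14 (k : ℕ) (hk : 1 ≤ k) :
    ∃ C : ℝ, 0 < C ∧ ∀ y X H : ℕ, 1 ≤ y → 1 ≤ X → 1 ≤ H →
      (BkCount k X H y : ℝ) ≤
        C * (H : ℝ) ^ (2 * k) * (tauNat 2 y : ℝ) * (tauNat k y : ℝ) ^ 2 *
          (1 + (X : ℝ) / (radk k y : ℝ)) := by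
  refine ⟨2 ^ k, by positivity, fun y X H hy hX hH => ?_⟩
  set Tset := Fintype.piFinset fun _ : Fin k => Finset.Icc 1 H with hTset
  have hTcard : Tset.card = H ^ k := by
    rw [hTset, Fintype.card_piFinset]
    simp [Nat.card_Icc]
  have hfib : (Bfin k y X H).card =
      ∑ κ ∈ (Fset k y) ×ˢ Tset, ((Bfin k y X H).filter fun s => keyf k y s = κ).card :=
    Finset.card_eq_sum_card_fiberwise fun s hs => keyf_mem hy hs
  have natstep : (Bfin k y X H).card ≤
      ∑ p ∈ Fset k y, H ^ k * ((X / Finset.univ.lcm p.1 + 1) * ∏ i, (2 * (H / p.2 i))) := by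
    rw [hfib]
    calc ∑ κ ∈ (Fset k y) ×ˢ Tset, ((Bfin k y X H).filter fun s => keyf k y s = κ).card
        ≤ ∑ κ ∈ (Fset k y) ×ˢ Tset,
            ((X / Finset.univ.lcm κ.1.1 + 1) * ∏ i, (2 * (H / κ.1.2 i))) := by
          refine Finset.sum_le_sum fun κ hκ => ?_
          obtain ⟨h1, -⟩ := Finset.mem_product.1 hκ
          have := fiber_card_le (X := X) (H := H) hy h1 κ.2
          simpa using this
      _ = ∑ p ∈ Fset k y, ∑ t ∈ Tset,
            ((X / Finset.univ.lcm p.1 + 1) * ∏ i, (2 * (H / p.2 i))) := by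
          rw [Finset.sum_product]
      _ = ∑ p ∈ Fset k y, H ^ k *
            ((X / Finset.univ.lcm p.1 + 1) * ∏ i, (2 * (H / p.2 i))) := by
          refine Finset.sum_congr rfl fun p _ => ?_
          rw [Finset.sum_const, hTcard, smul_eq_mul]
  calc (BkCount k X H y : ℝ)
      = ((Bfin k y X H).card : ℝ) := by rw [BkCount_eq]
    _ ≤ ((∑ p ∈ Fset k y, H ^ k * ((X / Finset.univ.lcm p.1 + 1) *
          ∏ i, (2 * (H / p.2 i))) : ℕ) : ℝ) := by exact_mod_cast natstep
    _ = ∑ p ∈ Fset k y, ((H ^ k * ((X / Finset.univ.lcm p.1 + 1) *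
          ∏ i, (2 * (H / p.2 i))) : ℕ) : ℝ) := by rw [Nat.cast_sum]
    _ ≤ ∑ _p ∈ Fset k y, (2 ^ k * (H : ℝ) ^ (2 * k) * (1 + (X : ℝ) / (radk k y : ℝ))) :=
        Finset.sum_le_sum fun p hp => term_bound hk hy hX hH hp
    _ = ((Fset k y).card : ℝ) * (2 ^ k * (H : ℝ) ^ (2 * k) * (1 + (X : ℝ) / (radk k y : ℝ))) := by
        rw [Finset.sum_const, nsmul_eq_mul]
    _ ≤ ((tauNat 2 y * (tauNat k y * tauNat k y) : ℕ) : ℝ) *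
          (2 ^ k * (H : ℝ) ^ (2 * k) * (1 + (X : ℝ) / (radk k y : ℝ))) := by
        have hrad : (0 : ℝ) < (radk k y : ℝ) := by exact_mod_cast radk_pos hk hy
        refine mul_le_mul_of_nonneg_right ?_ (by positivity)
        exact_mod_cast Fset_card_le hk hy
    _ = 2 ^ k * (H : ℝ) ^ (2 * k) * (tauNat 2 y : ℝ) * (tauNat k y : ℝ) ^ 2 *
          (1 + (X : ℝ) / (radk k y : ℝ)) := by
        push_cast
        ring
end
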